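/- arXiv:1608.04600 — 6 statements merged into one kernel-verified Lean document; each statement's English description precedes it below -/
import Mathlib

section
/- Fix β ∈ (0, 1/e), let ξ be the repelling real fixed point of E_β(x) = e^{βx} (so e^{βξ} = ξ and λ := βξ > 1), let L(x) = (log(x + ξ))/β − ξ for x ≥ 0, and set Ψ_n(x) = λ^n L^n(x). Then: (i) for every n ≥ 1, Ψ_n is differentiable on (0, ∞) and Ψ_n'(x) = ∏_{j=0}^{n-1} 1/(1 + L^j(x)/ξ) for all x > 0; (ii) for every N ∈ ℕ there exists x_N > 0 such that for all n ≥ N + 2 and all x ≥ x_N one has Ψ_n'(x) · ∏_{j=0}^{N} log^j(x) ≤ 1/2. -/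
open Filter MeasureTheory Set
open scoped Topology Real

noncomputable section

/-- The escaping set of an entire function: points whose iterates tend to infinity. -/
def escapingSet (f : ℂ → ℂ) : Set ℂ :=
  {z : ℂ | Tendsto (fun n : ℕ => ‖f^[n] z‖) atTop atTop}

/-- The maximum modulus `M(r, f)`. -/
def maxModulus (f : ℂ → ℂ) (r : ℝ) : ℝ :=
  sSup ((fun z => ‖f z‖) '' Metric.sphere (0 : ℂ) r)

/-- Critical values of `f`. -/
def criticalValues (f : ℂ → ℂ) : Set ℂ :=
  {a : ℂ | ∃ c : ℂ, deriv f c = 0 ∧ f c = a}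

/-- Finite asymptotic values of `f`. -/
def asymptoticValues (f : ℂ → ℂ) : Set ℂ :=
  {a : ℂ | ∃ γ : ℝ → ℂ, ContinuousOn γ (Set.Ici 0) ∧
    Tendsto (fun t => ‖γ t‖) atTop atTop ∧
    Tendsto (fun t => f (γ t)) atTop (𝓝 a)}

/-- The singular set `S(f)`. -/
def singularSet (f : ℂ → ℂ) : Set ℂ :=
  closure (criticalValues f ∪ asymptoticValues f)

def IsPolynomialFun (f : ℂ → ℂ) : Prop :=
  ∃ p : Polynomial ℂ, ∀ z, f z = p.eval z

/-- A transcendental entire function. -/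
def TranscendentalEntire (f : ℂ → ℂ) : Prop :=
  Differentiable ℂ f ∧ ¬ IsPolynomialFun f

/-- The Eremenko–Lyubich class `B`. -/
def EremenkoLyubichClass (f : ℂ → ℂ) : Prop :=
  TranscendentalEntire f ∧ Bornology.IsBounded (singularSet f)

/-- `θ(r)`: the measure of the set of angles at which `|f(r e^{it})| < r0`. -/
def thetaMeasure (f : ℂ → ℂ) (r0 r : ℝ) : ℝ :=
  (volume {t : ℝ | t ∈ Set.Icc 0 (2 * Real.pi) ∧
      ‖f ((r : ℂ) * Complex.exp (Complex.I * (t : ℂ)))‖ < r0}).toReal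

/-- The auxiliary map `L(x) = log(x + ξ)/β − ξ`. -/
def koenigsL (β ξ : ℝ) : ℝ → ℝ := fun y => Real.log (y + ξ) / β - ξ

/-- `Φ` is the Koenigs function associated to `β`: `ξ` is the repelling fixed point
of `E_β(x) = e^{βx}` with multiplier `λ = βξ > 1`, and
`Φ(x) = lim_{n→∞} λ^n L^n(x − ξ)` for `x ≥ ξ`. -/
def IsKoenigs (β ξ : ℝ) (Φ : ℝ → ℝ) : Prop :=
  Real.exp (β * ξ) = ξ ∧ 1 < β * ξ ∧
  ∀ x ≥ ξ, Tendsto (fun n : ℕ => (β * ξ) ^ n * (koenigsL β ξ)^[n] (x - ξ))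
    atTop (𝓝 (Φ x))

/-- `ε(r) = 1 / log Φ(r)`. -/
def epsK (Φ : ℝ → ℝ) (r : ℝ) : ℝ := 1 / Real.log (Φ r)

/-- The proximate order `ρ(r) = 1/2 + ε(r)`. -/
def rhoK (Φ : ℝ → ℝ) (r : ℝ) : ℝ := 1 / 2 + epsK Φ r

private lemma stmt8_L_pos (β ξ : ℝ) (hβ0 : 0 < β)
    (hξfix : Real.exp (β * ξ) = ξ) : ∀ y : ℝ, 0 < y → 0 < koenigsL β ξ y := by
  intro y hy
  have hξpos : 0 < ξ := hξfix ▸ Real.exp_pos _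
  have hlog : Real.log ξ = β * ξ := by
    have h := Real.log_exp (β * ξ); rw [hξfix] at h; exact h
  have h2 : β * ξ < Real.log (y + ξ) := by
    rw [← hlog]; exact Real.log_lt_log hξpos (by linarith)
  have : ξ < Real.log (y + ξ) / β := by
    rw [lt_div_iff₀ hβ0]; linarith [mul_comm ξ β]
  simp only [koenigsL]; linarith

private lemma stmt8_iter_pos (β ξ : ℝ) (hβ0 : 0 < β)
    (hξfix : Real.exp (β * ξ) = ξ) :
    ∀ j : ℕ, ∀ x : ℝ, 0 < x → 0 < (koenigsL β ξ)^[j] x := by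
  intro j
  induction j with
  | zero => intro x hx; simpa using hx
  | succ j ih =>
    intro x hx
    rw [Function.iterate_succ_apply']
    exact stmt8_L_pos β ξ hβ0 hξfix _ (ih x hx)

private lemma stmt8_hasDeriv (β ξ : ℝ) (hβ0 : 0 < β)
    (hξfix : Real.exp (β * ξ) = ξ) :
    ∀ n : ℕ, ∀ x : ℝ, 0 < x →
      HasDerivAt (fun y => (β * ξ) ^ n * (koenigsL β ξ)^[n] y)
        (∏ j ∈ Finset.range n, 1 / (1 + (koenigsL β ξ)^[j] x / ξ)) x := by
  have hξpos : 0 < ξ := hξfix ▸ Real.exp_pos _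
  intro n
  induction n with
  | zero =>
    intro x _
    simp
    exact hasDerivAt_id' x
  | succ n ih =>
    intro x hx
    have hLx : 0 < koenigsL β ξ x := stmt8_L_pos β ξ hβ0 hξfix x hx
    have hxξ : x + ξ ≠ 0 := by positivity
    have hL : HasDerivAt (koenigsL β ξ) (1 / (x + ξ) / β) x := by
      have h1 : HasDerivAt (fun y : ℝ => y + ξ) 1 x := (hasDerivAt_id x).add_const ξ
      have h2 := (Real.hasDerivAt_log hxξ).comp x h1
      have h3 := (h2.div_const β).sub_const ξ
      show HasDerivAt (fun y => Real.log (y + ξ) / β - ξ) _ x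
      simpa [koenigsL, mul_one] using h3
    have hIH := ih (koenigsL β ξ x) hLx
    have hcomp := (hIH.comp x hL).const_mul (β * ξ)
    have hfun : (fun y => (β * ξ) ^ (n + 1) * (koenigsL β ξ)^[n + 1] y)
        = fun y => (β * ξ) * ((fun z => (β * ξ) ^ n * (koenigsL β ξ)^[n] z) (koenigsL β ξ y)) := by
      funext y
      simp only [Function.iterate_succ_apply, pow_succ]
      ring
    rw [hfun]
    refine hcomp.congr_deriv ?_
    symm
    rw [Finset.prod_range_succ']
    simp only [Function.iterate_succ_apply, Function.iterate_zero_apply]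
    have hβne : β ≠ 0 := ne_of_gt hβ0
    have hξne : ξ ≠ 0 := ne_of_gt hξpos
    have hfac : 1 / (1 + x / ξ) = β * ξ * (1 / (x + ξ) / β) := by
      field_simp
      ring
    rw [hfac]
    ring

/-- with `Ψ_n(x) = λ^n L^n(x)`, (i) `Ψ_n` is differentiable on `(0,∞)` with
`Ψ_n'(x) = ∏_{j=0}^{n-1} 1/(1 + L^j(x)/ξ)`, and (ii) for every `N` there is `x_N > 0`
such that `Ψ_n'(x) ∏_{j=0}^N log^j(x) ≤ 1/2` for all `n ≥ N + 2` and `x ≥ x_N`. -/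
theorem stmt8 (β ξ : ℝ) (hβ0 : 0 < β) (hβ1 : β < 1 / Real.exp 1)
    (hξfix : Real.exp (β * ξ) = ξ) (hmult : 1 < β * ξ) :
    (∀ n : ℕ, 1 ≤ n → ∀ x : ℝ, 0 < x →
      HasDerivAt (fun y => (β * ξ) ^ n * (koenigsL β ξ)^[n] y)
        (∏ j ∈ Finset.range n, 1 / (1 + (koenigsL β ξ)^[j] x / ξ)) x) ∧
    (∀ N : ℕ, ∃ xN > (0 : ℝ), ∀ n : ℕ, N + 2 ≤ n → ∀ x ≥ xN,
      deriv (fun y => (β * ξ) ^ n * (koenigsL β ξ)^[n] y) x *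
          ∏ j ∈ Finset.range (N + 1), Real.log^[j] x ≤ 1 / 2) := by
  have hξpos : 0 < ξ := hξfix ▸ Real.exp_pos _
  have hexp1 : (1 : ℝ) < Real.exp 1 := by
    have := Real.add_one_le_exp (1 : ℝ); linarith
  have hβlt1 : β < 1 := lt_trans hβ1 (by rw [div_lt_one (by positivity)]; exact hexp1)
  set L := koenigsL β ξ with hLdef
  constructor
  · intro n _ x hx; exact stmt8_hasDeriv β ξ hβ0 hξfix n x hx
  intro N
  -- growth constant
  set c : ℝ := β * ξ / (1 - β) with hc
  have hcpos : 0 < c := div_pos (by positivity) (by linarith)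
  have hgrow : ∀ y : ℝ, Real.exp c ≤ y → Real.log y ≤ L y := by
    intro y hy
    have hypos : 0 < y := lt_of_lt_of_le (Real.exp_pos _) hy
    have h1 : c ≤ Real.log y := by
      rw [show c = Real.log (Real.exp c) by rw [Real.log_exp]]
      exact Real.log_le_log (Real.exp_pos _) hy
    have h2 : Real.log y ≤ Real.log (y + ξ) := Real.log_le_log hypos (by linarith)
    have h3 : β * ξ ≤ (1 - β) * Real.log y := by
      rw [hc, div_le_iff₀ (by linarith : (0:ℝ) < 1 - β)] at h1
      linarith
    simp only [hLdef, koenigsL]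
    rw [le_sub_iff_add_le, le_div_iff₀ hβ0]
    nlinarith [h2, h3]
  set A : ℝ := max (Real.exp c) (2 * ξ ^ (N + 2)) with hAdef
  have hApos : 0 < A := lt_of_lt_of_le (Real.exp_pos _) (le_max_left _ _)
  have hExpIter : ∀ k : ℕ, A ≤ Real.exp^[k] A := by
    intro k
    induction k with
    | zero => simp
    | succ k ih =>
      rw [Function.iterate_succ_apply']
      have := Real.add_one_le_exp (Real.exp^[k] A)
      linarith
  refine ⟨Real.exp^[N + 1] A, lt_of_lt_of_le hApos (hExpIter _), ?_⟩
  intro n hn x hxN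
  have hxA : A ≤ x := le_trans (hExpIter _) hxN
  have hx : 0 < x := lt_of_lt_of_le hApos hxA
  -- key chain inequality
  have H1 : ∀ j : ℕ, j ≤ N + 1 →
      Real.exp^[N + 1 - j] A ≤ Real.log^[j] x ∧ Real.log^[j] x ≤ L^[j] x := by
    intro j
    induction j with
    | zero => intro _; exact ⟨by simpa using hxN, le_refl _⟩
    | succ j ih =>
      intro hj
      obtain ⟨h1, h2⟩ := ih (by omega)
      have hjN : j ≤ N := by omega
      have e1 : N + 1 - j = (N - j) + 1 := by omega
      have e2 : N + 1 - (j + 1) = N - j := by omega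
      have hiterpos : (0 : ℝ) < Real.exp^[N + 1 - j] A := by
        rw [e1, Function.iterate_succ_apply']; exact Real.exp_pos _
      have hlogj_pos : 0 < Real.log^[j] x := lt_of_lt_of_le hiterpos h1
      constructor
      · rw [e2, Function.iterate_succ_apply']
        have := Real.log_le_log hiterpos h1
        rwa [e1, Function.iterate_succ_apply', Real.log_exp] at this
      · rw [Function.iterate_succ_apply', Function.iterate_succ_apply']
        have hAiter : A ≤ Real.exp^[N + 1 - j] A := hExpIter _
        have hec : Real.exp c ≤ L^[j] x :=
          le_trans (le_max_left _ _) (le_trans hAiter (le_trans h1 h2))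
        calc Real.log (Real.log^[j] x) ≤ Real.log (L^[j] x) :=
              Real.log_le_log hlogj_pos h2
          _ ≤ L (L^[j] x) := hgrow _ hec
  have hlogA : ∀ j : ℕ, j ≤ N + 1 → A ≤ Real.log^[j] x := by
    intro j hj
    exact le_trans (hExpIter _) (H1 j hj).1
  have hlogpos : ∀ j : ℕ, j ≤ N + 1 → 0 < Real.log^[j] x := fun j hj =>
    lt_of_lt_of_le hApos (hlogA j hj)
  -- the derivative value
  have hderiv : deriv (fun y => (β * ξ) ^ n * L^[n] y) x
      = ∏ j ∈ Finset.range n, 1 / (1 + L^[j] x / ξ) :=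
    (stmt8_hasDeriv β ξ hβ0 hξfix n x hx).deriv
  rw [hderiv]
  set f : ℕ → ℝ := fun j => 1 / (1 + L^[j] x / ξ) with hf
  have hfpos : ∀ j, 0 < f j := by
    intro j
    have := stmt8_iter_pos β ξ hβ0 hξfix j x hx
    rw [hf]; positivity
  have hfle1 : ∀ j, f j ≤ 1 := by
    intro j
    have hp := stmt8_iter_pos β ξ hβ0 hξfix j x hx
    rw [hf]
    rw [div_le_one (by positivity)]
    have : 0 ≤ L^[j] x / ξ := by positivity
    linarith
  -- drop trailing factors
  obtain ⟨m, rfl⟩ := Nat.exists_eq_add_of_le hn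
  have hsplit : ∏ j ∈ Finset.range (N + 2 + m), f j
      = (∏ j ∈ Finset.range (N + 2), f j) * ∏ j ∈ Finset.range m, f (N + 2 + j) :=
    Finset.prod_range_add f (N + 2) m
  have htail : ∏ j ∈ Finset.range m, f (N + 2 + j) ≤ 1 :=
    Finset.prod_le_one (fun j _ => (hfpos _).le) (fun j _ => hfle1 _)
  have hPpos : 0 ≤ ∏ j ∈ Finset.range (N + 1), Real.log^[j] x :=
    Finset.prod_nonneg fun j hj => (hlogpos j (by
      simp only [Finset.mem_range] at hj; omega)).le
  have hhead_pos : 0 ≤ ∏ j ∈ Finset.range (N + 2), f j :=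
    Finset.prod_nonneg fun j _ => (hfpos j).le
  have hstep1 : ∏ j ∈ Finset.range (N + 2 + m), f j ≤ ∏ j ∈ Finset.range (N + 2), f j := by
    rw [hsplit]
    calc (∏ j ∈ Finset.range (N + 2), f j) * ∏ j ∈ Finset.range m, f (N + 2 + j)
        ≤ (∏ j ∈ Finset.range (N + 2), f j) * 1 := by
          exact mul_le_mul_of_nonneg_left htail hhead_pos
      _ = _ := mul_one _
  have hmain : (∏ j ∈ Finset.range (N + 2), f j) * ∏ j ∈ Finset.range (N + 1), Real.log^[j] x
      ≤ 1 / 2 := by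
    rw [Finset.prod_range_succ]
    have hrw : (∏ j ∈ Finset.range (N + 1), f j) * f (N + 1) *
        ∏ j ∈ Finset.range (N + 1), Real.log^[j] x
        = (∏ j ∈ Finset.range (N + 1), f j * Real.log^[j] x) * f (N + 1) := by
      rw [Finset.prod_mul_distrib]; ring
    rw [hrw]
    -- each paired factor is at most ξ
    have hpair : ∀ j ∈ Finset.range (N + 1), f j * Real.log^[j] x ≤ ξ := by
      intro j hj
      simp only [Finset.mem_range] at hj
      have hjle : j ≤ N + 1 := by omega
      have hlp := hlogpos j hjle
      have hLlog : Real.log^[j] x ≤ L^[j] x := (H1 j hjle).2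
      have hLp : 0 < L^[j] x := lt_of_lt_of_le hlp hLlog
      have hfj : f j ≤ ξ / Real.log^[j] x := by
        rw [hf, div_le_div_iff₀ (by positivity) hlp]
        have hR : ξ * (1 + L^[j] x / ξ) = ξ + L^[j] x := by field_simp
        rw [one_mul, hR]
        linarith
      calc f j * Real.log^[j] x ≤ (ξ / Real.log^[j] x) * Real.log^[j] x :=
            mul_le_mul_of_nonneg_right hfj hlp.le
        _ = ξ := by field_simp
    have hprodpair : ∏ j ∈ Finset.range (N + 1), f j * Real.log^[j] x ≤ ξ ^ (N + 1) := by
      calc ∏ j ∈ Finset.range (N + 1), f j * Real.log^[j] x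
          ≤ ∏ j ∈ Finset.range (N + 1), ξ :=
            Finset.prod_le_prod (fun j hj => by
              have hjle : j ≤ N + 1 := by
                simp only [Finset.mem_range] at hj; omega
              exact mul_nonneg (hfpos j).le (hlogpos j hjle).le) hpair
        _ = ξ ^ (N + 1) := by rw [Finset.prod_const, Finset.card_range]
    have hlast : f (N + 1) ≤ 1 / (2 * ξ ^ (N + 1)) := by
      have hA2 : 2 * ξ ^ (N + 2) ≤ Real.log^[N + 1] x :=
        le_trans (le_max_right _ _) (hlogA (N + 1) le_rfl)
      have hL2 : 2 * ξ ^ (N + 2) ≤ L^[N + 1] x := le_trans hA2 (H1 (N + 1) le_rfl).2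
      rw [hf]
      have hd : 0 < 1 + L^[N + 1] x / ξ := by
        have := stmt8_iter_pos β ξ hβ0 hξfix (N + 1) x hx
        positivity
      rw [div_le_div_iff₀ hd (by positivity)]
      have h3 : 2 * ξ ^ (N + 1) ≤ L^[N + 1] x / ξ := by
        rw [le_div_iff₀ hξpos]
        calc 2 * ξ ^ (N + 1) * ξ = 2 * ξ ^ (N + 2) := by ring
          _ ≤ L^[N + 1] x := hL2
      linarith
    have hppos : 0 ≤ ∏ j ∈ Finset.range (N + 1), f j * Real.log^[j] x :=
      Finset.prod_nonneg fun j hj => by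
        have hjle : j ≤ N + 1 := by simp only [Finset.mem_range] at hj; omega
        exact mul_nonneg (hfpos j).le (hlogpos j hjle).le
    calc (∏ j ∈ Finset.range (N + 1), f j * Real.log^[j] x) * f (N + 1)
        ≤ ξ ^ (N + 1) * (1 / (2 * ξ ^ (N + 1))) :=
          mul_le_mul hprodpair hlast (hfpos _).le (by positivity)
      _ = 1 / 2 := by
          field_simp
  calc (∏ j ∈ Finset.range (N + 2 + m), f j) * ∏ j ∈ Finset.range (N + 1), Real.log^[j] x
      ≤ (∏ j ∈ Finset.range (N + 2), f j) * ∏ j ∈ Finset.range (N + 1), Real.log^[j] x :=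
        mul_le_mul_of_nonneg_right hstep1 hPpos
    _ ≤ 1 / 2 := hmain
end
end

section
/- Let Φ be the Koenigs function associated to β ∈ (0, 1/e) and set ε(r) = 1/log Φ(r) for r large enough that Φ(r) > 1. Then ε is differentiable for all sufficiently large r and lim_{r→∞} ε'(r) · r · log r = 0. Consequently ρ(r) := 1/2 + ε(r) satisfies lim_{r→∞} ρ(r) = 1/2 and lim_{r→∞} r · ρ'(r) · log r = 0, i.e. ρ is a proximate order. -/
open Filter MeasureTheory Set
open scoped Topology Real

noncomputable section

namespace S9

variable {β ξ : ℝ}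

def aIt (β ξ x : ℝ) (k : ℕ) : ℝ := (koenigsL β ξ)^[k] (x - ξ)

def Dn (β ξ : ℝ) (n : ℕ) (x : ℝ) : ℝ := ∏ k ∈ Finset.range n, ξ / (aIt β ξ x k + ξ)

def Dl (β ξ x : ℝ) : ℝ := Real.exp (-∑' k : ℕ, Real.log (1 + aIt β ξ x k / ξ))

lemma xi_pos (hfix : Real.exp (β * ξ) = ξ) : 0 < ξ := hfix ▸ Real.exp_pos _

lemma log_xi (hfix : Real.exp (β * ξ) = ξ) : Real.log ξ = β * ξ := by
  nth_rewrite 1 [← hfix]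
  rw [Real.log_exp]

lemma L_eq (hβ : 0 < β) (hfix : Real.exp (β * ξ) = ξ) {y : ℝ} (hy : 0 ≤ y) :
    koenigsL β ξ y = Real.log (1 + y / ξ) / β := by
  have hξ : 0 < ξ := xi_pos hfix
  have h1 : (0:ℝ) < 1 + y / ξ := by positivity
  have hyx : y + ξ = ξ * (1 + y / ξ) := by field_simp; ring
  unfold koenigsL
  rw [hyx, Real.log_mul (ne_of_gt hξ) (ne_of_gt h1), log_xi hfix]
  field_simp
  ring

lemma L_nonneg (hβ : 0 < β) (hfix : Real.exp (β * ξ) = ξ) {y : ℝ} (hy : 0 ≤ y) :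
    0 ≤ koenigsL β ξ y := by
  have hξ : 0 < ξ := xi_pos hfix
  rw [L_eq hβ hfix hy]
  have h : 0 ≤ Real.log (1 + y / ξ) := Real.log_nonneg (by nlinarith [div_nonneg hy hξ.le])
  positivity

lemma L_upper (hβ : 0 < β) (hfix : Real.exp (β * ξ) = ξ) {y : ℝ} (hy : 0 ≤ y) :
    β * ξ * koenigsL β ξ y ≤ y := by
  have hξ : 0 < ξ := xi_pos hfix
  rw [L_eq hβ hfix hy]
  have h1 : (0:ℝ) < 1 + y / ξ := by positivity
  have h2 : Real.log (1 + y / ξ) ≤ y / ξ := by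
    have := Real.log_le_sub_one_of_pos h1
    linarith
  calc β * ξ * (Real.log (1 + y / ξ) / β) = ξ * Real.log (1 + y / ξ) := by
        field_simp
    _ ≤ ξ * (y / ξ) := by nlinarith
    _ = y := by field_simp

lemma L_lower (hβ : 0 < β) (hfix : Real.exp (β * ξ) = ξ) {y : ℝ} (hy : 0 ≤ y) :
    y * (ξ / (y + ξ)) ≤ β * ξ * koenigsL β ξ y := by
  have hξ : 0 < ξ := xi_pos hfix
  rw [L_eq hβ hfix hy]
  have h1 : (0:ℝ) < 1 + y / ξ := by positivity
  have h2 : 1 - (1 + y / ξ)⁻¹ ≤ Real.log (1 + y / ξ) :=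
    Real.one_sub_inv_le_log_of_pos h1
  have h3 : 1 - (1 + y / ξ)⁻¹ = y / (y + ξ) := by
    rw [inv_eq_one_div]
    field_simp
    ring
  rw [h3] at h2
  have h4 : β * ξ * (Real.log (1 + y / ξ) / β) = ξ * Real.log (1 + y / ξ) := by
    field_simp
  rw [h4]
  have h5 : y * (ξ / (y + ξ)) = ξ * (y / (y + ξ)) := by ring
  rw [h5]
  nlinarith

lemma L_mono (hβ : 0 < β) (hfix : Real.exp (β * ξ) = ξ) {y z : ℝ} (hy : 0 ≤ y) (hyz : y ≤ z) :
    koenigsL β ξ y ≤ koenigsL β ξ z := by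
  have hξ : 0 < ξ := xi_pos hfix
  unfold koenigsL
  gcongr


lemma aIt_zero (x : ℝ) : aIt β ξ x 0 = x - ξ := rfl

lemma aIt_succ (x : ℝ) (k : ℕ) : aIt β ξ x (k+1) = koenigsL β ξ (aIt β ξ x k) :=
  Function.iterate_succ_apply' _ _ _

lemma aIt_nonneg (hβ : 0 < β) (hfix : Real.exp (β * ξ) = ξ) {x : ℝ} (hx : ξ ≤ x) (k : ℕ) :
    0 ≤ aIt β ξ x k := by
  induction k with
  | zero => rw [aIt_zero]; linarith
  | succ n ih => rw [aIt_succ]; exact L_nonneg hβ hfix ih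

lemma aIt_mono (hβ : 0 < β) (hfix : Real.exp (β * ξ) = ξ) {x y : ℝ} (hx : ξ ≤ x)
    (hxy : x ≤ y) (k : ℕ) : aIt β ξ x k ≤ aIt β ξ y k := by
  induction k with
  | zero => rw [aIt_zero, aIt_zero]; linarith
  | succ n ih => rw [aIt_succ, aIt_succ]; exact L_mono hβ hfix (aIt_nonneg hβ hfix hx n) ih

lemma fn_antitone (hβ : 0 < β) (hfix : Real.exp (β * ξ) = ξ) (hl : 1 < β * ξ)
    {x : ℝ} (hx : ξ ≤ x) :
    Antitone (fun n : ℕ => (β * ξ) ^ n * aIt β ξ x n) := by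
  apply antitone_nat_of_succ_le
  intro n
  have h1 : β * ξ * koenigsL β ξ (aIt β ξ x n) ≤ aIt β ξ x n :=
    L_upper hβ hfix (aIt_nonneg hβ hfix hx n)
  have h2 : (0:ℝ) ≤ (β * ξ) ^ n := by positivity
  simp only [aIt_succ, pow_succ]
  calc (β * ξ) ^ n * (β * ξ) * koenigsL β ξ (aIt β ξ x n)
      = (β * ξ) ^ n * (β * ξ * koenigsL β ξ (aIt β ξ x n)) := by ring
    _ ≤ (β * ξ) ^ n * aIt β ξ x n := by nlinarith

lemma fn_le (hβ : 0 < β) (hfix : Real.exp (β * ξ) = ξ) (hl : 1 < β * ξ)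
    {x : ℝ} (hx : ξ ≤ x) (n : ℕ) : (β * ξ) ^ n * aIt β ξ x n ≤ x - ξ := by
  have := fn_antitone hβ hfix hl hx (Nat.zero_le n)
  simpa [aIt_zero] using this

lemma aIt_le (hβ : 0 < β) (hfix : Real.exp (β * ξ) = ξ) (hl : 1 < β * ξ)
    {x : ℝ} (hx : ξ ≤ x) (n : ℕ) :
    aIt β ξ x n ≤ (x - ξ) * ((β * ξ)⁻¹) ^ n := by
  have hp : (0:ℝ) < (β * ξ) ^ n := by positivity
  rw [inv_pow, mul_comm, ← div_eq_inv_mul, le_div_iff₀ hp]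
  calc aIt β ξ x n * (β * ξ) ^ n = (β * ξ) ^ n * aIt β ξ x n := by ring
    _ ≤ x - ξ := fn_le hβ hfix hl hx n

lemma Dn_pos (hfix : Real.exp (β * ξ) = ξ) (hβ : 0 < β) {x : ℝ} (hx : ξ ≤ x) (n : ℕ) :
    0 < Dn β ξ n x := by
  apply Finset.prod_pos
  intro k _
  have := aIt_nonneg hβ hfix hx k
  have hξ := xi_pos hfix
  positivity

lemma Dn_le_one (hfix : Real.exp (β * ξ) = ξ) (hβ : 0 < β) {x : ℝ} (hx : ξ ≤ x) (n : ℕ) :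
    Dn β ξ n x ≤ 1 := by
  apply Finset.prod_le_one
  · intro k _
    have := aIt_nonneg hβ hfix hx k
    have hξ := xi_pos hfix
    positivity
  · intro k _
    have := aIt_nonneg hβ hfix hx k
    have hξ := xi_pos hfix
    rw [div_le_one (by linarith)]
    linarith

lemma fn_ge (hβ : 0 < β) (hfix : Real.exp (β * ξ) = ξ) (hl : 1 < β * ξ)
    {x : ℝ} (hx : ξ ≤ x) (n : ℕ) :
    (x - ξ) * Dn β ξ n x ≤ (β * ξ) ^ n * aIt β ξ x n := by
  have hξ := xi_pos hfix
  induction n with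
  | zero => simp [Dn, aIt_zero]
  | succ n ih =>
    have ha := aIt_nonneg hβ hfix hx n
    have hfac : (0:ℝ) ≤ ξ / (aIt β ξ x n + ξ) := by positivity
    have h1 : aIt β ξ x n * (ξ / (aIt β ξ x n + ξ)) ≤ β * ξ * koenigsL β ξ (aIt β ξ x n) :=
      L_lower hβ hfix ha
    have h2 : (0:ℝ) ≤ (β * ξ) ^ n := by positivity
    have hDn : Dn β ξ (n+1) x = Dn β ξ n x * (ξ / (aIt β ξ x n + ξ)) :=
      Finset.prod_range_succ _ _
    rw [hDn, aIt_succ, pow_succ]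
    calc (x - ξ) * (Dn β ξ n x * (ξ / (aIt β ξ x n + ξ)))
        = ((x - ξ) * Dn β ξ n x) * (ξ / (aIt β ξ x n + ξ)) := by ring
      _ ≤ ((β * ξ) ^ n * aIt β ξ x n) * (ξ / (aIt β ξ x n + ξ)) :=
          mul_le_mul_of_nonneg_right ih hfac
      _ = (β * ξ) ^ n * (aIt β ξ x n * (ξ / (aIt β ξ x n + ξ))) := by ring
      _ ≤ (β * ξ) ^ n * (β * ξ * koenigsL β ξ (aIt β ξ x n)) :=
          mul_le_mul_of_nonneg_left h1 h2
      _ = (β * ξ) ^ n * (β * ξ) * koenigsL β ξ (aIt β ξ x n) := by ring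

def tT (β ξ x : ℝ) (k : ℕ) : ℝ := Real.log (1 + aIt β ξ x k / ξ)

lemma tT_nonneg (hβ : 0 < β) (hfix : Real.exp (β * ξ) = ξ) {x : ℝ} (hx : ξ ≤ x) (k : ℕ) :
    0 ≤ tT β ξ x k := by
  have hξ := xi_pos hfix
  have := aIt_nonneg hβ hfix hx k
  exact Real.log_nonneg (by nlinarith [div_nonneg this hξ.le])

lemma tT_le (hβ : 0 < β) (hfix : Real.exp (β * ξ) = ξ) (hl : 1 < β * ξ)
    {x : ℝ} (hx : ξ ≤ x) (k : ℕ) :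
    tT β ξ x k ≤ ((x - ξ) / ξ) * ((β * ξ)⁻¹) ^ k := by
  have hξ := xi_pos hfix
  have ha := aIt_nonneg hβ hfix hx k
  have h1 : (0:ℝ) < 1 + aIt β ξ x k / ξ := by positivity
  have h2 : tT β ξ x k ≤ aIt β ξ x k / ξ := by
    have := Real.log_le_sub_one_of_pos h1
    unfold tT; linarith
  have h3 : aIt β ξ x k / ξ ≤ ((x - ξ) / ξ) * ((β * ξ)⁻¹) ^ k := by
    rw [div_le_iff₀ hξ] at *
    have := aIt_le hβ hfix hl hx k
    calc aIt β ξ x k ≤ (x - ξ) * ((β * ξ)⁻¹) ^ k := this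
      _ = (x - ξ) / ξ * (β * ξ)⁻¹ ^ k * ξ := by field_simp
  linarith

lemma tT_summable (hβ : 0 < β) (hfix : Real.exp (β * ξ) = ξ) (hl : 1 < β * ξ)
    {x : ℝ} (hx : ξ ≤ x) : Summable (tT β ξ x) := by
  have hr0 : (0:ℝ) ≤ (β * ξ)⁻¹ := by positivity
  have hr1 : (β * ξ)⁻¹ < 1 := by
    rw [inv_lt_one_iff₀]; right; exact hl
  exact Summable.of_nonneg_of_le (tT_nonneg hβ hfix hx)
    (tT_le hβ hfix hl hx)
    ((summable_geometric_of_lt_one hr0 hr1).mul_left _)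

lemma Dn_eq_exp (hβ : 0 < β) (hfix : Real.exp (β * ξ) = ξ) {x : ℝ} (hx : ξ ≤ x) (n : ℕ) :
    Dn β ξ n x = Real.exp (-(∑ k ∈ Finset.range n, tT β ξ x k)) := by
  have hξ := xi_pos hfix
  rw [← Finset.sum_neg_distrib, Real.exp_sum]
  apply Finset.prod_congr rfl
  intro k _
  have ha := aIt_nonneg hβ hfix hx k
  have h1 : (0:ℝ) < 1 + aIt β ξ x k / ξ := by positivity
  rw [tT, Real.exp_neg, Real.exp_log h1]
  rw [eq_comm, inv_eq_one_div, div_eq_div_iff (by linarith) (by linarith)]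
  field_simp
  ring

lemma Dl_le_Dn (hβ : 0 < β) (hfix : Real.exp (β * ξ) = ξ) (hl : 1 < β * ξ)
    {x : ℝ} (hx : ξ ≤ x) (n : ℕ) : Dl β ξ x ≤ Dn β ξ n x := by
  rw [Dn_eq_exp hβ hfix hx, Dl]
  apply Real.exp_le_exp.2
  simp only [neg_le_neg_iff]
  exact Summable.sum_le_tsum _ (fun k _ => tT_nonneg hβ hfix hx k) (tT_summable hβ hfix hl hx)

lemma Dl_pos (x : ℝ) : 0 < Dl β ξ x := Real.exp_pos _

lemma Dl_le_one (hβ : 0 < β) (hfix : Real.exp (β * ξ) = ξ) (hl : 1 < β * ξ)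
    {x : ℝ} (hx : ξ ≤ x) : Dl β ξ x ≤ 1 := by
  rw [Dl, Real.exp_le_one_iff, neg_nonpos]
  exact tsum_nonneg (tT_nonneg hβ hfix hx)

lemma Dn_sub_Dl (hβ : 0 < β) (hfix : Real.exp (β * ξ) = ξ) (hl : 1 < β * ξ)
    {x : ℝ} (hx : ξ ≤ x) (n : ℕ) :
    Dn β ξ n x - Dl β ξ x ≤
      ((x - ξ) / ξ) * (1 - (β * ξ)⁻¹)⁻¹ * ((β * ξ)⁻¹) ^ n := by
  have hξ := xi_pos hfix
  have hsum := tT_summable hβ hfix hl hx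
  have hr0 : (0:ℝ) ≤ (β * ξ)⁻¹ := by positivity
  have hr1 : (β * ξ)⁻¹ < 1 := by rw [inv_lt_one_iff₀]; right; exact hl
  have hadd := Summable.sum_add_tsum_nat_add (f := tT β ξ x) n hsum
  have hsum' : Summable (fun k => tT β ξ x (k + n)) := (summable_nat_add_iff n).2 hsum
  have h1 : ∀ k, tT β ξ x (k + n) ≤ (((x - ξ) / ξ) * ((β * ξ)⁻¹) ^ n) * ((β * ξ)⁻¹) ^ k := by
    intro k
    calc tT β ξ x (k + n) ≤ ((x - ξ) / ξ) * ((β * ξ)⁻¹) ^ (k + n) := tT_le hβ hfix hl hx _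
      _ = (((x - ξ) / ξ) * ((β * ξ)⁻¹) ^ n) * ((β * ξ)⁻¹) ^ k := by rw [pow_add]; ring
  have htb : (∑' k, tT β ξ x (k + n)) ≤ ((x - ξ) / ξ) * (1 - (β * ξ)⁻¹)⁻¹ * ((β * ξ)⁻¹) ^ n := by
    calc (∑' k, tT β ξ x (k + n))
        ≤ ∑' k, (((x - ξ) / ξ) * ((β * ξ)⁻¹) ^ n) * ((β * ξ)⁻¹) ^ k :=
          Summable.tsum_le_tsum h1 hsum' ((summable_geometric_of_lt_one hr0 hr1).mul_left _)
      _ = (((x - ξ) / ξ) * ((β * ξ)⁻¹) ^ n) * (1 - (β * ξ)⁻¹)⁻¹ := by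
          rw [tsum_mul_left, tsum_geometric_of_lt_one hr0 hr1]
      _ = ((x - ξ) / ξ) * (1 - (β * ξ)⁻¹)⁻¹ * ((β * ξ)⁻¹) ^ n := by ring
  have hSle : (∑ k ∈ Finset.range n, tT β ξ x k) ≤ ∑' k, tT β ξ x k :=
    Summable.sum_le_tsum _ (fun k _ => tT_nonneg hβ hfix hx k) hsum
  have key : Dn β ξ n x - Dl β ξ x ≤
      (∑' k, tT β ξ x k) - ∑ k ∈ Finset.range n, tT β ξ x k := by
    rw [Dn_eq_exp hβ hfix hx, Dl]
    have hfold : (∑' k, Real.log (1 + aIt β ξ x k / ξ)) = ∑' k, tT β ξ x k := rfl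
    rw [hfold]
    have hu : (0:ℝ) ≤ (∑' k, tT β ξ x k) - ∑ k ∈ Finset.range n, tT β ξ x k := by linarith
    have e1 : Real.exp (-(∑' k, tT β ξ x k)) = Real.exp (-(∑ k ∈ Finset.range n, tT β ξ x k)) *
        Real.exp (-((∑' k, tT β ξ x k) - ∑ k ∈ Finset.range n, tT β ξ x k)) := by
      rw [← Real.exp_add]; ring_nf
    have e2 : 1 - ((∑' k, tT β ξ x k) - ∑ k ∈ Finset.range n, tT β ξ x k) ≤
        Real.exp (-((∑' k, tT β ξ x k) - ∑ k ∈ Finset.range n, tT β ξ x k)) := by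
      have := Real.add_one_le_exp (-((∑' k, tT β ξ x k) - ∑ k ∈ Finset.range n, tT β ξ x k))
      linarith
    have e3 : Real.exp (-(∑ k ∈ Finset.range n, tT β ξ x k)) ≤ 1 := by
      rw [Real.exp_le_one_iff]
      have : (0:ℝ) ≤ ∑ k ∈ Finset.range n, tT β ξ x k :=
        Finset.sum_nonneg (fun k _ => tT_nonneg hβ hfix hx k)
      linarith
    have e4 : (0:ℝ) < Real.exp (-(∑ k ∈ Finset.range n, tT β ξ x k)) := Real.exp_pos _
    nlinarith
  linarith

lemma hasDerivAt_aIt (hβ : 0 < β) (hfix : Real.exp (β * ξ) = ξ) {x : ℝ} (hx : ξ ≤ x) (n : ℕ) :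
    HasDerivAt (fun y => aIt β ξ y n)
      (∏ k ∈ Finset.range n, (β * (aIt β ξ x k + ξ))⁻¹) x := by
  have hξ := xi_pos hfix
  induction n with
  | zero =>
    simpa [aIt_zero] using (hasDerivAt_id x).sub_const ξ
  | succ n ih =>
    have hfun : (fun y => aIt β ξ y (n+1)) = fun y => koenigsL β ξ (aIt β ξ y n) := by
      funext y; exact aIt_succ y n
    have ha := aIt_nonneg hβ hfix hx n
    have h0 : (0:ℝ) < aIt β ξ x n + ξ := by linarith
    have hlog : HasDerivAt (fun y : ℝ => Real.log (y + ξ)) ((aIt β ξ x n + ξ)⁻¹ * 1)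
        (aIt β ξ x n) :=
      HasDerivAt.comp (aIt β ξ x n) (Real.hasDerivAt_log h0.ne')
        ((hasDerivAt_id _).add_const ξ)
    have hL : HasDerivAt (koenigsL β ξ) ((aIt β ξ x n + ξ)⁻¹ * 1 / β) (aIt β ξ x n) :=
      (hlog.div_const β).sub_const ξ
    have hcomp := hL.comp x ih
    rw [hfun]
    refine hcomp.congr_deriv ?_
    rw [Finset.prod_range_succ]
    field_simp

lemma hasDerivAt_fn (hβ : 0 < β) (hfix : Real.exp (β * ξ) = ξ) {x : ℝ} (hx : ξ ≤ x) (n : ℕ) :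
    HasDerivAt (fun y => (β * ξ) ^ n * aIt β ξ y n) (Dn β ξ n x) x := by
  have hξ := xi_pos hfix
  have h := (hasDerivAt_aIt hβ hfix hx n).const_mul ((β * ξ) ^ n)
  refine h.congr_deriv ?_
  rw [Dn, show ((β * ξ):ℝ) ^ n = ∏ _k ∈ Finset.range n, (β * ξ) by
    rw [Finset.prod_const, Finset.card_range], ← Finset.prod_mul_distrib]
  apply Finset.prod_congr rfl
  intro k _
  have ha := aIt_nonneg hβ hfix hx k
  have h0 : (0:ℝ) < aIt β ξ x k + ξ := by linarith
  field_simp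

lemma Dn_tendstoUniformlyOn (hβ : 0 < β) (hfix : Real.exp (β * ξ) = ξ) (hl : 1 < β * ξ)
    {b : ℝ} (hb : ξ < b) :
    TendstoUniformlyOn (fun n x => Dn β ξ n x) (Dl β ξ) atTop (Set.Ioo ξ b) := by
  have hξ := xi_pos hfix
  rw [Metric.tendstoUniformlyOn_iff]
  intro ε hε
  have hr0 : (0:ℝ) ≤ (β * ξ)⁻¹ := by positivity
  have hr1 : (β * ξ)⁻¹ < 1 := by rw [inv_lt_one_iff₀]; right; exact hl
  have hC : (0:ℝ) ≤ ((b - ξ) / ξ) * (1 - (β * ξ)⁻¹)⁻¹ :=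
    mul_nonneg (div_nonneg (by linarith) hξ.le) (by rw [inv_nonneg]; linarith)
  have hlim : Tendsto (fun n : ℕ => ((b - ξ) / ξ) * (1 - (β * ξ)⁻¹)⁻¹ * ((β * ξ)⁻¹) ^ n)
      atTop (𝓝 0) := by
    rw [show (0:ℝ) = ((b - ξ) / ξ) * (1 - (β * ξ)⁻¹)⁻¹ * 0 by ring]
    exact (tendsto_pow_atTop_nhds_zero_of_lt_one hr0 hr1).const_mul _
  filter_upwards [(hlim.eventually (gt_mem_nhds hε))] with n hn x hx
  have hx1 : ξ ≤ x := hx.1.le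
  have h1 : Dn β ξ n x - Dl β ξ x ≤ ((b - ξ) / ξ) * (1 - (β * ξ)⁻¹)⁻¹ * ((β * ξ)⁻¹) ^ n := by
    calc Dn β ξ n x - Dl β ξ x ≤ ((x - ξ) / ξ) * (1 - (β * ξ)⁻¹)⁻¹ * ((β * ξ)⁻¹) ^ n :=
          Dn_sub_Dl hβ hfix hl hx1 n
      _ ≤ ((b - ξ) / ξ) * (1 - (β * ξ)⁻¹)⁻¹ * ((β * ξ)⁻¹) ^ n := by
          have hK : (0:ℝ) ≤ (1 - (β * ξ)⁻¹)⁻¹ := by rw [inv_nonneg]; linarith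
          have hxb : x - ξ ≤ b - ξ := by linarith [hx.2]
          have : (x - ξ) / ξ ≤ (b - ξ) / ξ := by gcongr
          have hp : (0:ℝ) ≤ ((β * ξ)⁻¹) ^ n := by positivity
          exact mul_le_mul_of_nonneg_right (mul_le_mul_of_nonneg_right this hK) hp
  have h2 : Dl β ξ x ≤ Dn β ξ n x := Dl_le_Dn hβ hfix hl hx1 n
  rw [Real.dist_eq, abs_of_nonpos (by linarith)]
  calc -(Dl β ξ x - Dn β ξ n x) = Dn β ξ n x - Dl β ξ x := by ring
    _ ≤ ((b - ξ) / ξ) * (1 - (β * ξ)⁻¹)⁻¹ * ((β * ξ)⁻¹) ^ n := h1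
    _ < ε := hn

variable {Φ : ℝ → ℝ}

def Ht (β ξ : ℝ) (Φ : ℝ → ℝ) : Prop :=
  ∀ x ≥ ξ, Tendsto (fun n : ℕ => (β * ξ) ^ n * (koenigsL β ξ)^[n] (x - ξ)) atTop (𝓝 (Φ x))

lemma Ht_aIt (ht : Ht β ξ Φ) {x : ℝ} (hx : ξ ≤ x) :
    Tendsto (fun n : ℕ => (β * ξ) ^ n * aIt β ξ x n) atTop (𝓝 (Φ x)) := ht x hx

lemma hasDerivAt_Phi (hβ : 0 < β) (hfix : Real.exp (β * ξ) = ξ) (hl : 1 < β * ξ)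
    (ht : Ht β ξ Φ) {r : ℝ} (hr : ξ < r) : HasDerivAt Φ (Dl β ξ r) r := by
  have hmem : r ∈ Set.Ioo ξ (r + 1) := ⟨hr, by linarith⟩
  exact hasDerivAt_of_tendstoUniformlyOn (isOpen_Ioo)
    (Dn_tendstoUniformlyOn hβ hfix hl (by linarith : ξ < r + 1))
    (Eventually.of_forall fun n x hx => hasDerivAt_fn hβ hfix hx.1.le n)
    (fun x hx => Ht_aIt ht hx.1.le) hmem

lemma Phi_le (hβ : 0 < β) (hfix : Real.exp (β * ξ) = ξ) (hl : 1 < β * ξ)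
    (ht : Ht β ξ Φ) {x : ℝ} (hx : ξ ≤ x) : Φ x ≤ x - ξ :=
  le_of_tendsto (Ht_aIt ht hx) (Eventually.of_forall (fn_le hβ hfix hl hx))

lemma Phi_ge (hβ : 0 < β) (hfix : Real.exp (β * ξ) = ξ) (hl : 1 < β * ξ)
    (ht : Ht β ξ Φ) {x : ℝ} (hx : ξ ≤ x) : (x - ξ) * Dl β ξ x ≤ Φ x := by
  apply ge_of_tendsto (Ht_aIt ht hx)
  apply Eventually.of_forall
  intro n
  calc (x - ξ) * Dl β ξ x ≤ (x - ξ) * Dn β ξ n x :=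
        mul_le_mul_of_nonneg_left (Dl_le_Dn hβ hfix hl hx n) (by linarith)
    _ ≤ (β * ξ) ^ n * aIt β ξ x n := fn_ge hβ hfix hl hx n

lemma Phi_mono (hβ : 0 < β) (hfix : Real.exp (β * ξ) = ξ) (ht : Ht β ξ Φ)
    {x y : ℝ} (hx : ξ ≤ x) (hxy : x ≤ y) : Φ x ≤ Φ y := by
  have hξ := xi_pos hfix
  apply le_of_tendsto_of_tendsto' (Ht_aIt ht hx) (Ht_aIt ht (hx.trans hxy))
  intro n
  exact mul_le_mul_of_nonneg_left (aIt_mono hβ hfix hx hxy n) (by positivity)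

lemma aIt_shift (hβ : 0 < β) (x : ℝ) (k : ℕ) :
    aIt β ξ (Real.exp (β * x)) (k + 1) = aIt β ξ x k := by
  have h1 : koenigsL β ξ (Real.exp (β * x) - ξ) = x - ξ := by
    unfold koenigsL
    rw [sub_add_cancel, Real.log_exp]
    field_simp
  unfold aIt
  rw [Function.iterate_succ_apply, h1]

lemma exp_ge_xi (hβ : 0 < β) (hfix : Real.exp (β * ξ) = ξ) {x : ℝ} (hx : ξ ≤ x) :
    ξ ≤ Real.exp (β * x) := by
  rw [← hfix]
  exact Real.exp_le_exp.2 (by nlinarith)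

lemma Phi_funceq (hβ : 0 < β) (hfix : Real.exp (β * ξ) = ξ) (hl : 1 < β * ξ)
    (ht : Ht β ξ Φ) {x : ℝ} (hx : ξ ≤ x) :
    Φ (Real.exp (β * x)) = (β * ξ) * Φ x := by
  have hEx := exp_ge_xi hβ hfix hx
  have h1 := Ht_aIt ht hEx
  have h2 : Tendsto (fun n : ℕ => (β * ξ) ^ (n + 1) * aIt β ξ (Real.exp (β * x)) (n + 1))
      atTop (𝓝 (Φ (Real.exp (β * x)))) := h1.comp (tendsto_add_atTop_nat 1)
  have h3 : (fun n : ℕ => (β * ξ) ^ (n + 1) * aIt β ξ (Real.exp (β * x)) (n + 1)) =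
      fun n : ℕ => (β * ξ) * ((β * ξ) ^ n * aIt β ξ x n) := by
    funext n
    rw [aIt_shift hβ, pow_succ]
    ring
  rw [h3] at h2
  exact tendsto_nhds_unique h2 ((Ht_aIt ht hx).const_mul _)

lemma Dl_funceq (hβ : 0 < β) (hfix : Real.exp (β * ξ) = ξ) (hl : 1 < β * ξ)
    {x : ℝ} (hx : ξ ≤ x) :
    Dl β ξ (Real.exp (β * x)) = ξ / Real.exp (β * x) * Dl β ξ x := by
  have hξ := xi_pos hfix
  have hEx := exp_ge_xi hβ hfix hx
  have hE0 : (0:ℝ) < Real.exp (β * x) := Real.exp_pos _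
  have hsumE := tT_summable hβ hfix hl hEx
  have h0 : ∑' k, tT β ξ (Real.exp (β * x)) k =
      tT β ξ (Real.exp (β * x)) 0 + ∑' k, tT β ξ (Real.exp (β * x)) (k + 1) :=
    Summable.tsum_eq_zero_add hsumE
  have h1 : (fun k : ℕ => tT β ξ (Real.exp (β * x)) (k + 1)) = tT β ξ x := by
    funext k
    unfold tT
    rw [aIt_shift hβ]
  have h2 : tT β ξ (Real.exp (β * x)) 0 = β * x - β * ξ := by
    unfold tT
    rw [aIt_zero]
    have : 1 + (Real.exp (β * x) - ξ) / ξ = Real.exp (β * x) / ξ := by field_simp; ring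
    rw [this, Real.log_div hE0.ne' hξ.ne', Real.log_exp, log_xi hfix]
  have fold : ∀ y : ℝ, Dl β ξ y = Real.exp (-∑' k, tT β ξ y k) := fun y => rfl
  rw [fold, fold, h0, h1, h2, neg_add, Real.exp_add]
  congr 1
  rw [show -(β * x - β * ξ) = β * ξ - β * x by ring, Real.exp_sub, hfix]

lemma Phi_pos (hβ : 0 < β) (hfix : Real.exp (β * ξ) = ξ) (hl : 1 < β * ξ)
    (ht : Ht β ξ Φ) {x : ℝ} (hx : ξ < x) : 0 < Φ x := by
  have := Phi_ge hβ hfix hl ht hx.le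
  have := Dl_pos (β := β) (ξ := ξ) x
  nlinarith

lemma Phi_tendsto_atTop (hβ : 0 < β) (hfix : Real.exp (β * ξ) = ξ) (hl : 1 < β * ξ)
    (ht : Ht β ξ Φ) : Tendsto Φ atTop atTop := by
  have hξ := xi_pos hfix
  set E : ℝ → ℝ := fun y => Real.exp (β * y) with hE
  set xs : ℕ → ℝ := fun n => E^[n] (ξ + 1) with hxs
  have hxsge : ∀ n, ξ ≤ xs n := by
    intro n
    induction n with
    | zero =>
      simp only [hxs, Function.iterate_zero, id_eq]
      linarith
    | succ n ih =>
      have : xs (n + 1) = E (xs n) := Function.iterate_succ_apply' _ _ _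
      rw [this]
      exact exp_ge_xi hβ hfix ih
  have hΦxs : ∀ n, Φ (xs n) = (β * ξ) ^ n * Φ (ξ + 1) := by
    intro n
    induction n with
    | zero => simp [hxs]
    | succ n ih =>
      have h1 : xs (n + 1) = E (xs n) := Function.iterate_succ_apply' _ _ _
      rw [h1, hE]
      have := Phi_funceq hβ hfix hl ht (hxsge n)
      rw [this, ih, pow_succ]
      ring
  have hc : 0 < Φ (ξ + 1) := Phi_pos hβ hfix hl ht (by linarith)
  have hgrow : Tendsto (fun n : ℕ => (β * ξ) ^ n * Φ (ξ + 1)) atTop atTop :=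
    Tendsto.atTop_mul_const hc (tendsto_pow_atTop_atTop_of_one_lt hl)
  rw [tendsto_atTop]
  intro b
  obtain ⟨n, hn⟩ := (tendsto_atTop.1 hgrow b).exists
  filter_upwards [eventually_ge_atTop (xs n)] with r hr
  calc b ≤ (β * ξ) ^ n * Φ (ξ + 1) := hn
    _ = Φ (xs n) := (hΦxs n).symm
    _ ≤ Φ r := Phi_mono hβ hfix ht (hxsge n) hr

lemma log_r_pos (hfix : Real.exp (β * ξ) = ξ) (hl : 1 < β * ξ) {r : ℝ} (hr : ξ ≤ r) :
    1 < Real.log r := by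
  have hξ := xi_pos hfix
  have h1 : (1:ℝ) < β * ξ := hl
  calc (1:ℝ) < β * ξ := h1
    _ = Real.log ξ := (log_xi hfix).symm
    _ ≤ Real.log r := Real.log_le_log hξ hr

lemma rDl_le (hβ : 0 < β) (hfix : Real.exp (β * ξ) = ξ) (hl : 1 < β * ξ)
    {r : ℝ} (hr : ξ ≤ r) : r * Dl β ξ r ≤ β * ξ ^ 2 / Real.log r := by
  have hξ := xi_pos hfix
  have hr0 : (0:ℝ) < r := lt_of_lt_of_le hξ hr
  have hlr : 1 < Real.log r := log_r_pos hfix hl hr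
  set s : ℝ := Real.log r / β with hs
  have hsr : Real.exp (β * s) = r := by
    rw [hs]
    rw [show β * (Real.log r / β) = Real.log r by field_simp]
    exact Real.exp_log hr0
  have hsξ : ξ ≤ s := by
    rw [hs, le_div_iff₀ hβ]
    calc ξ * β = β * ξ := by ring
      _ = Real.log ξ := (log_xi hfix).symm
      _ ≤ Real.log r := Real.log_le_log hξ hr
  have hs0 : 0 < s := lt_of_lt_of_le hξ hsξ
  have hD1 : Dl β ξ r = ξ / r * Dl β ξ s := by
    rw [← hsr]
    exact Dl_funceq hβ hfix hl hsξ
  -- second step at s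
  have hss : Real.exp (β * (Real.log s / β)) = s := by
    rw [show β * (Real.log s / β) = Real.log s by field_simp]
    exact Real.exp_log hs0
  have hs1ξ : ξ ≤ Real.log s / β := by
    rw [le_div_iff₀ hβ]
    calc ξ * β = β * ξ := by ring
      _ = Real.log ξ := (log_xi hfix).symm
      _ ≤ Real.log s := Real.log_le_log hξ hsξ
  have hD2 : Dl β ξ s = ξ / s * Dl β ξ (Real.log s / β) := by
    have h := Dl_funceq hβ hfix hl hs1ξ
    rwa [hss] at h
  have hDs1 : Dl β ξ (Real.log s / β) ≤ 1 := Dl_le_one hβ hfix hl hs1ξ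
  have hDs1' : 0 < Dl β ξ (Real.log s / β) := Dl_pos _
  calc r * Dl β ξ r = r * (ξ / r * Dl β ξ s) := by rw [hD1]
    _ = ξ * Dl β ξ s := by field_simp
    _ = ξ * (ξ / s * Dl β ξ (Real.log s / β)) := by rw [hD2]
    _ ≤ ξ * (ξ / s * 1) := by
        apply mul_le_mul_of_nonneg_left _ hξ.le
        exact mul_le_mul_of_nonneg_left hDs1 (by positivity)
    _ = ξ ^ 2 / s := by field_simp
    _ = β * ξ ^ 2 / Real.log r := by
        rw [hs]
        field_simp

end S9

/-- `ε(r) = 1/log Φ(r)` is differentiable for large `r` with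
`ε'(r) r log r → 0`; consequently `ρ(r) = 1/2 + ε(r)` satisfies `ρ(r) → 1/2` and
`r ρ'(r) log r → 0`, i.e. `ρ` is a proximate order. -/
theorem stmt9 (β ξ : ℝ) (hβ0 : 0 < β) (hβ1 : β < 1 / Real.exp 1)
    (Φ : ℝ → ℝ) (hK : IsKoenigs β ξ Φ) :
    ∃ R : ℝ, (∀ r ≥ R, 1 < Φ r ∧ DifferentiableAt ℝ (epsK Φ) r) ∧
      Tendsto (fun r => deriv (epsK Φ) r * r * Real.log r) atTop (𝓝 0) ∧
      Tendsto (rhoK Φ) atTop (𝓝 (1 / 2)) ∧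
      Tendsto (fun r => r * deriv (rhoK Φ) r * Real.log r) atTop (𝓝 0) := by
  obtain ⟨hfix, hl, htend⟩ := hK
  have ht : S9.Ht β ξ Φ := htend
  have hξ := S9.xi_pos hfix
  have hΦtop : Tendsto Φ atTop atTop := S9.Phi_tendsto_atTop hβ0 hfix hl ht
  have hlogΦ : Tendsto (fun r => Real.log (Φ r)) atTop atTop :=
    Real.tendsto_log_atTop.comp hΦtop
  obtain ⟨R₀, hR₀⟩ := (tendsto_atTop.1 hΦtop 2).exists_forall_of_atTop
  set R : ℝ := max R₀ (ξ + 1) with hR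
  have hRξ : ξ + 1 ≤ R := le_max_right _ _
  have hder : ∀ r ≥ R, HasDerivAt (epsK Φ)
      (-(S9.Dl β ξ r / Φ r) / (Real.log (Φ r)) ^ 2) r := by
    intro r hr
    have hrξ : ξ < r := by linarith [hRξ.trans hr]
    have hΦ2 : 2 ≤ Φ r := hR₀ r ((le_max_left _ _).trans hr)
    have hΦpos : (0:ℝ) < Φ r := by linarith
    have hlogpos : 0 < Real.log (Φ r) := Real.log_pos (by linarith)
    have hΦd : HasDerivAt Φ (S9.Dl β ξ r) r := S9.hasDerivAt_Phi hβ0 hfix hl ht hrξ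
    have hlogd : HasDerivAt (fun y => Real.log (Φ y)) (S9.Dl β ξ r / Φ r) r := by
      have h := (Real.hasDerivAt_log hΦpos.ne').comp r hΦd
      refine h.congr_deriv ?_
      ring
    have hinv := hlogd.inv hlogpos.ne'
    have heq : epsK Φ = fun y => (Real.log (Φ y))⁻¹ := by
      funext y; rw [epsK, one_div]
    rw [heq]
    exact hinv
  have hmain : Tendsto (fun r => deriv (epsK Φ) r * r * Real.log r) atTop (𝓝 0) := by
    have hc : 0 < Φ (ξ + 1) := S9.Phi_pos hβ0 hfix hl ht (by linarith)
    have hsq : Tendsto (fun r => (Real.log (Φ r)) ^ 2) atTop atTop :=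
      (tendsto_pow_atTop two_ne_zero).comp hlogΦ
    have hg : Tendsto (fun r => β * ξ ^ 2 / Φ (ξ + 1) * ((Real.log (Φ r)) ^ 2)⁻¹)
        atTop (𝓝 0) := by
      rw [show (0:ℝ) = β * ξ ^ 2 / Φ (ξ + 1) * 0 by ring]
      exact (tendsto_inv_atTop_zero.comp hsq).const_mul _
    apply squeeze_zero_norm' _ hg
    filter_upwards [eventually_ge_atTop R] with r hr
    have hrξ : ξ < r := by linarith [hRξ.trans hr]
    have hΦ2 : 2 ≤ Φ r := hR₀ r ((le_max_left _ _).trans hr)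
    have hΦpos : (0:ℝ) < Φ r := by linarith
    have hlogpos : 0 < Real.log (Φ r) := Real.log_pos (by linarith)
    have hlr : 1 < Real.log r := S9.log_r_pos hfix hl hrξ.le
    have hDpos : 0 < S9.Dl β ξ r := S9.Dl_pos _
    have h1 : r * S9.Dl β ξ r ≤ β * ξ ^ 2 / Real.log r := S9.rDl_le hβ0 hfix hl hrξ.le
    have h2 : r * S9.Dl β ξ r * Real.log r ≤ β * ξ ^ 2 := by
      have := mul_le_mul_of_nonneg_right h1 (by linarith : (0:ℝ) ≤ Real.log r)
      calc r * S9.Dl β ξ r * Real.log r ≤ β * ξ ^ 2 / Real.log r * Real.log r := this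
        _ = β * ξ ^ 2 := by field_simp
    have h3 : Φ (ξ + 1) ≤ Φ r := S9.Phi_mono hβ0 hfix ht (by linarith) (by linarith)
    rw [(hder r hr).deriv]
    have hval : -(S9.Dl β ξ r / Φ r) / Real.log (Φ r) ^ 2 * r * Real.log r =
        -(r * S9.Dl β ξ r * Real.log r / (Φ r * Real.log (Φ r) ^ 2)) := by
      field_simp
    have habs : 0 ≤ r * S9.Dl β ξ r * Real.log r / (Φ r * Real.log (Φ r) ^ 2) := by
      apply div_nonneg
      · have hr0 : (0:ℝ) < r := hξ.trans hrξ
        exact mul_nonneg (mul_nonneg hr0.le hDpos.le) (by linarith)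
      · exact mul_nonneg hΦpos.le (sq_nonneg _)
    rw [hval, norm_neg, Real.norm_eq_abs, abs_of_nonneg habs]
    calc r * S9.Dl β ξ r * Real.log r / (Φ r * Real.log (Φ r) ^ 2)
        ≤ β * ξ ^ 2 / (Φ (ξ + 1) * Real.log (Φ r) ^ 2) := by
          apply div_le_div₀ (by positivity) h2 (mul_pos hc (by positivity))
          exact mul_le_mul_of_nonneg_right h3 (sq_nonneg _)
      _ = β * ξ ^ 2 / Φ (ξ + 1) * ((Real.log (Φ r)) ^ 2)⁻¹ := by
          rw [div_eq_mul_inv, mul_inv, div_eq_mul_inv]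
          ring
  refine ⟨R, fun r hr => ?_, ?_, ?_, ?_⟩
  · have hΦ2 : 2 ≤ Φ r := hR₀ r ((le_max_left _ _).trans hr)
    exact ⟨by linarith, (hder r hr).differentiableAt⟩
  · exact hmain
  · -- rho tends to 1/2
    have hε : Tendsto (epsK Φ) atTop (𝓝 0) := by
      have h := tendsto_inv_atTop_zero.comp hlogΦ
      have heq : epsK Φ = fun r => (Real.log (Φ r))⁻¹ := by
        funext y; rw [epsK, one_div]
      rw [heq]
      exact h
    have : Tendsto (rhoK Φ) atTop (𝓝 (1 / 2 + 0)) := by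
      have heq : rhoK Φ = fun r => 1 / 2 + epsK Φ r := rfl
      rw [heq]
      exact tendsto_const_nhds.add hε
    simpa using this
  · have heq : (fun r => r * deriv (rhoK Φ) r * Real.log r) =
        fun r => deriv (epsK Φ) r * r * Real.log r := by
      funext r
      have h : deriv (rhoK Φ) r = deriv (epsK Φ) r := by
        have h2 : rhoK Φ = fun y => 1 / 2 + epsK Φ y := rfl
        rw [h2, deriv_const_add]
      rw [h]; ring
    rw [heq]
    exact hmain
end
end

section
/- Let ξ > e, β = (log ξ)/ξ, and λ = log ξ (so 0 < β < 1/e, λ > 1 and e^{βξ} = ξ). Let Φ : [ξ, ∞) → ℝ be nondecreasing with Φ(e^{βx}) = λ · Φ(x) for all x ≥ ξ, and suppose Φ(x1) > 1 for some x1 ≥ ξ. Then for every x ≥ ξ there exists k0 ∈ ℕ such that Φ(E^k(x)) > 1 for all k ≥ k0 and the series ∑_{k ≥ k0} 1/log Φ(E^k(x)) diverges. -/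
open Filter
open scoped Topology

noncomputable section

/-- let `ξ > e`, `β = log ξ / ξ`, `λ = log ξ`, and let `Φ` be nondecreasing
on `[ξ, ∞)` with `Φ(e^{βx}) = λ Φ(x)` and `Φ(x1) > 1` for some `x1 ≥ ξ`. Then for every
`x ≥ ξ` there is `k0` with `Φ(E^k(x)) > 1` for `k ≥ k0` and
`∑_{k ≥ k0} 1/log Φ(E^k(x)) = ∞`. -/
theorem stmt14 (ξ : ℝ) (hξ : Real.exp 1 < ξ) (Φ : ℝ → ℝ)
    (hmono : ∀ x y : ℝ, ξ ≤ x → x ≤ y → Φ x ≤ Φ y)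
    (heq : ∀ x ≥ ξ, Φ (Real.exp ((Real.log ξ / ξ) * x)) = Real.log ξ * Φ x)
    (x1 : ℝ) (hx1 : ξ ≤ x1) (hΦx1 : 1 < Φ x1) :
    ∀ x ≥ ξ, ∃ k0 : ℕ,
      (∀ k : ℕ, k0 ≤ k → 1 < Φ (Real.exp^[k] x)) ∧
      Tendsto (fun n : ℕ => ∑ k ∈ Finset.range n,
          1 / Real.log (Φ (Real.exp^[k0 + k] x))) atTop atTop := by
  intro x hx
  set β : ℝ := Real.log ξ / ξ with hβdef
  set lam : ℝ := Real.log ξ with hlamdef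
  set g : ℝ → ℝ := fun y => Real.exp (β * y) with hgdef
  have hξ0 : (0:ℝ) < ξ := lt_trans (Real.exp_pos 1) hξ
  have hlam1 : 1 < lam := by
    have := Real.log_lt_log (Real.exp_pos 1) hξ
    rwa [Real.log_exp] at this
  have hlam0 : (0:ℝ) < lam := lt_trans one_pos hlam1
  have hβ0 : (0:ℝ) < β := div_pos hlam0 hξ0
  have hβξ : β * ξ = lam := div_mul_cancel₀ _ (ne_of_gt hξ0)
  have hexpβξ : Real.exp (β * ξ) = ξ := by
    rw [hβξ, hlamdef, Real.exp_log hξ0]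
  -- g(y) ≥ y and g(y) ≥ ξ for y ≥ ξ
  have hg_ge_self : ∀ y : ℝ, ξ ≤ y → y ≤ g y := by
    intro y hy
    have hy0 : (0:ℝ) < y := lt_of_lt_of_le hξ0 hy
    have hanti := Real.log_div_self_antitoneOn
      (le_of_lt hξ) (le_trans (le_of_lt hξ) hy) hy
    -- log y / y ≤ log ξ / ξ = β
    have : Real.log y ≤ β * y := by
      rw [hβdef]
      calc Real.log y = (Real.log y / y) * y := by field_simp
        _ ≤ (Real.log ξ / ξ) * y := by
            exact mul_le_mul_of_nonneg_right hanti (le_of_lt hy0)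
    calc y = Real.exp (Real.log y) := (Real.exp_log hy0).symm
      _ ≤ Real.exp (β * y) := Real.exp_le_exp.2 this
  have hg_ge_ξ : ∀ y : ℝ, ξ ≤ y → ξ ≤ g y := by
    intro y hy
    calc ξ = Real.exp (β * ξ) := hexpβξ.symm
      _ ≤ Real.exp (β * y) := Real.exp_le_exp.2 (by nlinarith)
  -- exp t ≥ t^2/4 for t ≥ 0
  have hexp_sq : ∀ t : ℝ, 0 ≤ t → t^2 / 4 ≤ Real.exp t := by
    intro t ht
    have h1 : t / 2 ≤ Real.exp (t / 2) := by
      have := Real.add_one_le_exp (t / 2); linarith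
    have h2 : (t/2) * (t/2) ≤ Real.exp (t/2) * Real.exp (t/2) :=
      mul_le_mul h1 h1 (by linarith) (le_of_lt (Real.exp_pos _))
    rw [← Real.exp_add] at h2
    calc t^2/4 = (t/2) * (t/2) := by ring
      _ ≤ Real.exp (t/2 + t/2) := h2
      _ = Real.exp t := by ring_nf
  -- key: for y large, exp y ≤ g (g y)
  set x₀ : ℝ := max ξ (4 / β^3) with hx₀def
  have hx₀ξ : ξ ≤ x₀ := le_max_left _ _
  have hgg : ∀ y : ℝ, x₀ ≤ y → Real.exp y ≤ g (g y) := by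
    intro y hy
    have hyξ : ξ ≤ y := le_trans hx₀ξ hy
    have hy0 : (0:ℝ) < y := lt_of_lt_of_le hξ0 hyξ
    have hy4 : 4 / β^3 ≤ y := le_trans (le_max_right _ _) hy
    -- y ≤ β * exp (β y)
    have h1 : (β*y)^2/4 ≤ Real.exp (β*y) := hexp_sq _ (by positivity)
    have h2 : y ≤ β * Real.exp (β * y) := by
      have hβ3 : 4 ≤ β^3 * y := by
        rw [div_le_iff₀ (by positivity)] at hy4; linarith
      nlinarith [sq_nonneg y, Real.exp_pos (β*y)]
    calc Real.exp y ≤ Real.exp (β * Real.exp (β * y)) := Real.exp_le_exp.2 h2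
      _ = g (g y) := rfl
  -- iterates of exp from x
  have hexp_iter_ge : ∀ k : ℕ, x + k ≤ Real.exp^[k] x := by
    intro k
    induction k with
    | zero => simp
    | succ n ih =>
      rw [Function.iterate_succ_apply']
      have := Real.add_one_le_exp (Real.exp^[n] x)
      push_cast; linarith
  have hexp_iter_ξ : ∀ k : ℕ, ξ ≤ Real.exp^[k] x := by
    intro k
    have := hexp_iter_ge k
    have : x ≤ Real.exp^[k] x := by
      have : (0:ℝ) ≤ (k:ℝ) := Nat.cast_nonneg k
      linarith [hexp_iter_ge k]
    linarith
  have hexp_iter_mono : Monotone (fun k : ℕ => Real.exp^[k] x) := by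
    apply monotone_nat_of_le_succ
    intro n
    rw [Function.iterate_succ_apply']
    have := Real.add_one_le_exp (Real.exp^[n] x)
    linarith
  -- choose k0
  refine ⟨⌈x1⌉₊, ?_, ?_⟩
  · intro k hk
    have h1 : x1 ≤ Real.exp^[k] x := by
      have h2 : x1 ≤ (⌈x1⌉₊ : ℝ) := Nat.le_ceil x1
      have h3 : (⌈x1⌉₊ : ℝ) ≤ (k : ℝ) := Nat.cast_le.2 hk
      have := hexp_iter_ge k
      linarith
    exact lt_of_lt_of_le hΦx1 (hmono x1 _ hx1 h1)
  · -- divergence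
    set k0 : ℕ := ⌈x1⌉₊ with hk0def
    have hΦgt : ∀ k : ℕ, 1 < Φ (Real.exp^[k0 + k] x) := by
      intro k
      have h1 : x1 ≤ Real.exp^[k0 + k] x := by
        have h2 : x1 ≤ (⌈x1⌉₊ : ℝ) := Nat.le_ceil x1
        have h3 : ((k0:ℕ) : ℝ) ≤ ((k0 + k : ℕ) : ℝ) := by
          exact_mod_cast Nat.le_add_right _ _
        have h4 := hexp_iter_ge (k0 + k)
        have hx0 : (0:ℝ) < x := lt_of_lt_of_le hξ0 hx
        push_cast at h3 h4 ⊢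
        linarith
      exact lt_of_lt_of_le hΦx1 (hmono x1 _ hx1 h1)
    -- upper bound machinery
    set y₀ : ℝ := max x x₀ with hy₀def
    set z : ℝ := Real.exp y₀ with hzdef
    have hy₀x₀ : x₀ ≤ y₀ := le_max_right _ _
    have hzy₀ : y₀ ≤ z := by
      have := Real.add_one_le_exp y₀; rw [hzdef]; linarith
    have hzx₀ : x₀ ≤ z := le_trans hy₀x₀ hzy₀
    have main : ∀ m : ℕ, x₀ ≤ g^[m] z ∧ Φ (g^[m] z) = lam ^ m * Φ z := by
      intro m
      induction m with
      | zero => simpa using hzx₀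
      | succ n ih =>
        obtain ⟨ih1, ih2⟩ := ih
        have hξn : ξ ≤ g^[n] z := le_trans hx₀ξ ih1
        constructor
        · rw [Function.iterate_succ_apply']
          exact le_trans ih1 (hg_ge_self _ hξn)
        · rw [Function.iterate_succ_apply']
          have := heq (g^[n] z) hξn
          rw [hgdef]
          simp only []
          rw [this, ih2, pow_succ]
          ring
    have hcomp : ∀ k : ℕ, Real.exp^[k] x ≤ g^[2*k] z := by
      intro k
      induction k with
      | zero =>
        simp only [Function.iterate_zero, id, Nat.mul_zero]
        exact le_trans (le_max_left x x₀) hzy₀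
      | succ n ih =>
        have h1 : x₀ ≤ g^[2*n] z := (main (2*n)).1
        have h2 : Real.exp (Real.exp^[n] x) ≤ Real.exp (g^[2*n] z) :=
          Real.exp_le_exp.2 ih
        have h3 : Real.exp (g^[2*n] z) ≤ g (g (g^[2*n] z)) := hgg _ h1
        have : 2 * (n+1) = (2*n) + 1 + 1 := by ring
        rw [this, Function.iterate_succ_apply', Function.iterate_succ_apply',
          Function.iterate_succ_apply']
        exact le_trans h2 h3
    have hΦub : ∀ k : ℕ, Φ (Real.exp^[k] x) ≤ lam ^ (2*k) * Φ z := by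
      intro k
      have := hmono (Real.exp^[k] x) (g^[2*k] z) (hexp_iter_ξ k) (hcomp k)
      rw [(main (2*k)).2] at this
      exact this
    have hM0 : 0 < Φ z := by
      have h1 := hΦub k0
      have h2 := hΦgt 0
      rw [Nat.add_zero] at h2
      nlinarith [pow_pos hlam0 (2*k0)]
    -- set constants
    set C : ℝ := 2 * k0 * Real.log lam + Real.log (Φ z) with hCdef
    set D : ℝ := 2 * Real.log lam with hDdef
    have hloglam : 0 < Real.log lam := Real.log_pos hlam1
    have hD0 : 0 < D := by positivity
    have hbound : ∀ k : ℕ, Real.log (Φ (Real.exp^[k0+k] x)) ≤ C + D * k := by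
      intro k
      have hpos : 0 < Φ (Real.exp^[k0+k] x) := lt_trans one_pos (hΦgt k)
      have h1 := Real.log_le_log hpos (hΦub (k0+k))
      rw [Real.log_mul (by positivity) (ne_of_gt hM0), Real.log_pow] at h1
      calc Real.log (Φ (Real.exp^[k0+k] x))
          ≤ (2*(k0+k) : ℕ) * Real.log lam + Real.log (Φ z) := h1
        _ = C + D * k := by push_cast; ring
    have hC0 : 0 < C := by
      have h1 := hbound 0
      have h2 : 0 < Real.log (Φ (Real.exp^[k0+0] x)) :=
        Real.log_pos (hΦgt 0)
      simp only [Nat.cast_zero, mul_zero, add_zero, Nat.add_zero] at h1 h2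
      linarith
    -- comparison with harmonic series
    have hcmp : ∀ k : ℕ, (1 / (C + D)) * (1 / (k+1)) ≤
        1 / Real.log (Φ (Real.exp^[k0+k] x)) := by
      intro k
      have ha : 0 < Real.log (Φ (Real.exp^[k0+k] x)) := Real.log_pos (hΦgt k)
      have hb : Real.log (Φ (Real.exp^[k0+k] x)) ≤ (C + D) * (k+1) := by
        have := hbound k
        have hk1 : (0:ℝ) ≤ (k:ℝ) := Nat.cast_nonneg k
        nlinarith
      have h1 : (1:ℝ) / ((C+D)*(k+1)) ≤ 1 / Real.log (Φ (Real.exp^[k0+k] x)) :=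
        one_div_le_one_div_of_le ha hb
      calc (1 / (C + D)) * (1 / (k+1) : ℝ) = 1 / ((C+D)*(k+1)) := by
            rw [div_mul_div_comm, one_mul]
        _ ≤ _ := h1
    have hdiv : Tendsto (fun n : ℕ => ∑ k ∈ Finset.range n,
        (1/(C+D)) * (1/(k+1) : ℝ)) atTop atTop := by
      simp only [← Finset.mul_sum]
      exact Real.tendsto_sum_range_one_div_nat_succ_atTop.const_mul_atTop
        (by positivity)
    apply tendsto_atTop_mono _ hdiv
    intro n
    exact Finset.sum_le_sum (fun k _ => hcmp k)
end
end

section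
/- Let 0 < β < 1 and define F_β(y) = β e^y (so F_1(y) = e^y). Let c > log(2/β) and let x ∈ ℝ with e^x > c. Then for every k ≥ 1 one has F_β^k(x + c) ≥ F_1^k(x) + c. Consequently, with E_β(y) = e^{βy} and E(y) = e^y, one has E_β^k((x + c)/β) > E^k(x) for every k ≥ 1. -/
open Filter

noncomputable section

lemma stmt15_conj (β : ℝ) (hβ : β ≠ 0) :
    ∀ (k : ℕ) (t : ℝ),
      (fun y => Real.exp (β * y))^[k] (t / β) = (fun y => β * Real.exp y)^[k] t / β := by
  intro k
  induction k with
  | zero => intro t; simp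
  | succ k ih =>
    intro t
    simp only [Function.iterate_succ_apply]
    have h1 : Real.exp (β * (t / β)) = (β * Real.exp t) / β := by
      field_simp
    rw [h1, ih]

/-- with `F_β(y) = β e^y`, if `c > log(2/β)` and `e^x > c`, then
`F_β^k(x + c) ≥ F_1^k(x) + c` for every `k ≥ 1`; consequently, with `E_β(y) = e^{βy}`
and `E(y) = e^y`, one has `E_β^k((x + c)/β) > E^k(x)` for every `k ≥ 1`. -/
theorem stmt15 (β : ℝ) (hβ0 : 0 < β) (hβ1 : β < 1)
    (c x : ℝ) (hc : Real.log (2 / β) < c) (hx : c < Real.exp x) :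
    ∀ k : ℕ, 1 ≤ k →
      Real.exp^[k] x + c ≤ (fun y => β * Real.exp y)^[k] (x + c) ∧
      Real.exp^[k] x < (fun y => Real.exp (β * y))^[k] ((x + c) / β) := by
  have h2β : (2 : ℝ) < 2 / β := by
    rw [lt_div_iff₀ hβ0]; nlinarith
  have hc0 : 0 < c := lt_trans (lt_trans (Real.log_pos (by norm_num))
    (Real.log_lt_log (by norm_num) h2β)) hc
  have hβec : 2 < β * Real.exp c := by
    have := Real.exp_lt_exp.mpr hc
    rw [Real.exp_log (by positivity)] at this
    calc (2:ℝ) = β * (2 / β) := by field_simp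
      _ < β * Real.exp c := by nlinarith
  -- main induction: F part plus c < exp^[k] x
  have main : ∀ k : ℕ, 1 ≤ k →
      Real.exp^[k] x + c ≤ (fun y => β * Real.exp y)^[k] (x + c) ∧ c < Real.exp^[k] x := by
    intro k hk
    induction k, hk using Nat.le_induction with
    | base =>
      constructor
      · simp only [Function.iterate_one]
        have : β * Real.exp (x + c) = β * Real.exp c * Real.exp x := by
          rw [Real.exp_add]; ring
        rw [this]
        nlinarith [Real.exp_pos x]
      · simpa using hx
    | succ k hk ih =>
      obtain ⟨hF, hA⟩ := ih
      set A := Real.exp^[k] x with hAdef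
      have hexp : Real.exp^[k+1] x = Real.exp A := by
        rw [Function.iterate_succ_apply']
      have hAexp : A < Real.exp A := Real.add_one_le_exp A |>.trans_lt' (by linarith)
      constructor
      · rw [Function.iterate_succ_apply' Real.exp, Function.iterate_succ_apply' (fun y => β * Real.exp y), ← hAdef]

        have h1 : Real.exp (A + c) ≤ Real.exp ((fun y => β * Real.exp y)^[k] (x + c)) :=
          Real.exp_le_exp.mpr hF
        have h2 : Real.exp (A + c) = Real.exp c * Real.exp A := by
          rw [Real.exp_add]; ring
        have h3 : β * (Real.exp c * Real.exp A) ≥ 2 * Real.exp A := by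
          nlinarith [Real.exp_pos A]
        have : β * Real.exp (A + c) ≤ β * Real.exp ((fun y => β * Real.exp y)^[k] (x + c)) :=
          by nlinarith
        have hcA : c < Real.exp A := lt_trans hA hAexp
        nlinarith [Real.exp_pos A]
      · rw [hexp]; exact lt_trans hA hAexp
  intro k hk
  obtain ⟨hF, hA⟩ := main k hk
  refine ⟨hF, ?_⟩
  rw [stmt15_conj β (ne_of_gt hβ0)]
  have hA0 : 0 < Real.exp^[k] x := lt_trans hc0 hA
  rw [lt_div_iff₀ hβ0]
  nlinarith [hF]
end
end

section
/- Let S ⊆ ℂ be a Lebesgue measurable set with S + 2πi = S, and let φ(x) denote the one-dimensional Lebesgue measure of {y ∈ [0, 2π] : x + iy ∈ S}. Let x0 ≥ 0 and let φ0 : [x0, ∞) → [0, ∞) be nonincreasing with φ(x) ≥ φ0(x) for all x ≥ x0. Let w ∈ ℂ with Re w ≥ 64π and (63/64)·Re w ≥ x0, and let Q = {z ∈ ℂ : |Re(z − w)| ≤ Re w / 64 and |Im(z − w)| ≤ Re w / 64}. Then area(S ∩ Q) / area(Q) ≥ (1/(4π)) · φ0((65/64)·Re w). -/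
open MeasureTheory Set
open scoped Real ENNReal

noncomputable section

/-- For a measurable `p`-periodic set `A ⊆ ℝ`, the measure of `A ∩ Ioc c (c+p)` does not
depend on `c`. -/
lemma periodic_meas_Ioc {A : Set ℝ} (hA : MeasurableSet A) {p : ℝ} (hp : 0 < p)
    (hper : ∀ y, y + p ∈ A ↔ y ∈ A) (c : ℝ) :
    volume (A ∩ Ioc c (c + p)) = volume (A ∩ Ioc 0 (0 + p)) := by
  haveI : VAddInvariantMeasure (AddSubgroup.zmultiples p) ℝ volume :=
    ⟨fun c s _ => measure_preimage_add _ _ _⟩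
  have hz : ∀ (m : ℤ) (y : ℝ), y + m * p ∈ A ↔ y ∈ A := by
    intro m
    induction m using Int.induction_on with
    | zero => simp
    | succ n ih =>
      intro y
      have e : y + (((n : ℤ) + 1 : ℤ) : ℝ) * p = (y + (((n : ℤ) : ℝ)) * p) + p := by
        push_cast; ring
      rw [e, hper]
      exact ih y
    | pred n ih =>
      intro y
      have e : (y + ((-(n : ℤ) - 1 : ℤ) : ℝ) * p) + p = y + ((-(n : ℤ) : ℤ) : ℝ) * p := by
        push_cast; ring
      rw [← hper (y + ((-(n : ℤ) - 1 : ℤ) : ℝ) * p), e]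
      exact ih y
  have hinv : ∀ g : AddSubgroup.zmultiples p, (fun x => g +ᵥ x) ⁻¹' A = A := by
    rintro ⟨g, hg⟩
    obtain ⟨m, rfl⟩ := AddSubgroup.mem_zmultiples_iff.1 hg
    ext y
    simp only [mem_preimage]
    have : (⟨m • p, hg⟩ : AddSubgroup.zmultiples p) +ᵥ y = y + m * p := by
      show m • p + y = y + m * p
      rw [zsmul_eq_mul]; ring
    rw [this, hz]
  exact (isAddFundamentalDomain_Ioc hp c).measure_set_eq (isAddFundamentalDomain_Ioc hp 0) hA hinv

/-- Lower bound for the measure of a periodic set on a long interval. -/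
lemma periodic_meas_lower {A : Set ℝ} (hA : MeasurableSet A) {p : ℝ} (hp : 0 < p)
    (hper : ∀ y, y + p ∈ A ↔ y ∈ A) :
    ∀ (n : ℕ) (c d : ℝ), c + n * p ≤ d →
      (n : ℝ≥0∞) * volume (A ∩ Ioc 0 (0 + p)) ≤ volume (A ∩ Ioc c d) := by
  intro n
  induction n with
  | zero => simp
  | succ n ih =>
    intro c d hcd
    have hn0 : (0:ℝ) ≤ (n : ℝ) := Nat.cast_nonneg n
    have hcd' : (c + p) + n * p ≤ d := by push_cast at hcd; linarith
    have h1 : c + p ≤ d := by nlinarith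
    have hsub : (A ∩ Ioc c (c + p)) ∪ (A ∩ Ioc (c + p) d) ⊆ A ∩ Ioc c d := by
      rw [← inter_union_distrib_left,
        Ioc_union_Ioc_eq_Ioc (by linarith [hp.le] : c ≤ c + p) h1]
    have hdisj : Disjoint (A ∩ Ioc c (c + p)) (A ∩ Ioc (c + p) d) :=
      (Ioc_disjoint_Ioc_of_le le_rfl).mono inter_subset_right inter_subset_right
    calc ((n + 1 : ℕ) : ℝ≥0∞) * volume (A ∩ Ioc 0 (0 + p))
        = volume (A ∩ Ioc 0 (0 + p)) + (n : ℝ≥0∞) * volume (A ∩ Ioc 0 (0 + p)) := by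
          push_cast; ring
      _ ≤ volume (A ∩ Ioc c (c + p)) + volume (A ∩ Ioc (c + p) d) := by
          rw [periodic_meas_Ioc hA hp hper c]
          exact add_le_add le_rfl (ih (c + p) d hcd')
      _ = volume ((A ∩ Ioc c (c + p)) ∪ (A ∩ Ioc (c + p) d)) :=
          (measure_union hdisj (hA.inter measurableSet_Ioc)).symm
      _ ≤ volume (A ∩ Ioc c d) := measure_mono hsub

/-- for a `2πi`-periodic measurable set `S ⊆ ℂ` whose vertical slice
measure `φ(x)` dominates a nonincreasing `φ0` on `[x0, ∞)`, the density of `S` in the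
square `Q` centred at `w` of half-side `Re w / 64` is at least
`(1/(4π)) φ0((65/64) Re w)`, provided `Re w ≥ 64π` and `(63/64) Re w ≥ x0`. -/
theorem stmt17 (S : Set ℂ) (hSmeas : MeasurableSet S)
    (hSper : (fun z => z + 2 * (π : ℂ) * Complex.I) '' S = S)
    (x0 : ℝ) (hx0 : 0 ≤ x0) (φ0 : ℝ → ℝ)
    (hφ0nn : ∀ x ≥ x0, 0 ≤ φ0 x)
    (hφ0mono : ∀ x y : ℝ, x0 ≤ x → x ≤ y → φ0 y ≤ φ0 x)
    (hφ : ∀ x ≥ x0, φ0 x ≤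
      (volume {y : ℝ | y ∈ Set.Icc 0 (2 * π) ∧ ((x : ℂ) + (y : ℂ) * Complex.I) ∈ S}).toReal)
    (w : ℂ) (hw1 : 64 * π ≤ w.re) (hw2 : x0 ≤ 63 / 64 * w.re) :
    (1 / (4 * π)) * φ0 (65 / 64 * w.re) ≤
      (volume (S ∩ {z : ℂ | |(z - w).re| ≤ w.re / 64 ∧ |(z - w).im| ≤ w.re / 64})).toReal /
        (volume {z : ℂ | |(z - w).re| ≤ w.re / 64 ∧ |(z - w).im| ≤ w.re / 64}).toReal := by
  have hπ : (0:ℝ) < π := Real.pi_pos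
  set h : ℝ := w.re / 64 with hh_def
  have hwre : 0 < w.re := lt_of_lt_of_le (by positivity) hw1
  have hhπ : π ≤ h := by rw [hh_def]; linarith
  have hh0 : 0 < h := lt_of_lt_of_le hπ hhπ
  set a : ℝ := w.re - h with ha_def
  set b : ℝ := w.re + h with hb_def
  set c : ℝ := w.im - h with hc_def
  set d : ℝ := w.im + h with hd_def
  set Qc : Set ℂ := {z : ℂ | |(z - w).re| ≤ h ∧ |(z - w).im| ≤ h} with hQc_def
  set φ0b : ℝ := φ0 (65 / 64 * w.re) with hφ0b_def
  have hbval : b = 65 / 64 * w.re := by rw [hb_def, hh_def]; ring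
  have haval : a = 63 / 64 * w.re := by rw [ha_def, hh_def]; ring
  -- periodicity of S
  have hSp : ∀ z : ℂ, z + 2 * (π : ℂ) * Complex.I ∈ S ↔ z ∈ S := by
    intro z
    constructor
    · intro hz
      rw [← hSper] at hz
      obtain ⟨u, hu, hue⟩ := hz
      have : u = z := by
        have := add_right_cancel hue
        exact this
      exact this ▸ hu
    · intro hz
      rw [← hSper]
      exact ⟨z, hz, rfl⟩
  -- the square as a preimage
  have hQ : Qc = Complex.measurableEquivRealProd ⁻¹' (Icc a b ×ˢ Icc c d) := by
    ext z
    simp only [hQc_def, mem_setOf_eq, mem_preimage, Complex.measurableEquivRealProd_apply,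
      mem_prod, mem_Icc, Complex.sub_re, Complex.sub_im, abs_le, ha_def, hb_def, hc_def, hd_def]
    constructor
    · rintro ⟨⟨h1, h2⟩, h3, h4⟩
      exact ⟨⟨by linarith, by linarith⟩, by linarith, by linarith⟩
    · rintro ⟨⟨h1, h2⟩, h3, h4⟩
      exact ⟨⟨by linarith, by linarith⟩, by linarith, by linarith⟩
  have hQrmeas : MeasurableSet (Icc a b ×ˢ Icc c d : Set (ℝ × ℝ)) :=
    measurableSet_Icc.prod measurableSet_Icc
  have hQcmeas : MeasurableSet Qc := hQ ▸ hQrmeas.preimage Complex.measurableEquivRealProd.measurable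
  have hQvol : volume Qc = ENNReal.ofReal (2 * h) * ENNReal.ofReal (2 * h) := by
    rw [hQ, Complex.volume_preserving_equiv_real_prod.measure_preimage_equiv,
      Measure.volume_eq_prod, Measure.prod_prod, Real.volume_Icc, Real.volume_Icc,
      show b - a = 2 * h by rw [ha_def, hb_def]; ring,
      show d - c = 2 * h by rw [hc_def, hd_def]; ring]
  -- transfer S ∩ Qc to ℝ × ℝ
  set T : Set (ℝ × ℝ) := Complex.measurableEquivRealProd.symm ⁻¹' (S ∩ Qc) with hT_def
  have hTmeas : MeasurableSet T :=
    (hSmeas.inter hQcmeas).preimage Complex.measurableEquivRealProd.symm.measurable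
  have hST : volume (S ∩ Qc) = volume T := by
    have hpre : Complex.measurableEquivRealProd ⁻¹' T = S ∩ Qc := by
      ext z; simp [hT_def]
    rw [← hpre, Complex.volume_preserving_equiv_real_prod.measure_preimage_equiv]
  have hFub : volume T = ∫⁻ x, volume (Prod.mk x ⁻¹' T) := by
    rw [Measure.volume_eq_prod, Measure.prod_apply hTmeas]
  set n : ℕ := Nat.floor (h / π) with hn_def
  set C : ℝ≥0∞ := ENNReal.ofReal φ0b with hC_def
  have hn1 : 1 ≤ (n : ℝ) := by
    have h1 : (1:ℝ) ≤ h / π := (one_le_div hπ).2 hhπ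
    exact_mod_cast Nat.one_le_cast.2 (Nat.le_floor (by exact_mod_cast h1))
  have hnle : (n : ℝ) ≤ h / π := Nat.floor_le (by positivity)
  have hnge : h ≤ 2 * π * (n : ℝ) := by
    have hfl : h / π < (n : ℝ) + 1 := Nat.lt_floor_add_one _
    rcases le_or_gt (h / π) 2 with hc2 | hc2
    · have : h ≤ 2 * π := by rw [div_le_iff₀ hπ] at hc2; linarith
      nlinarith
    · have h1 : h / π - 1 < (n : ℝ) := by linarith
      have h2 : h < π * ((n : ℝ) + 1) := by rw [div_lt_iff₀ hπ] at hfl; linarith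
      nlinarith
  -- slice lower bound
  have hslice : ∀ x ∈ Icc a b, (n : ℝ≥0∞) * C ≤ volume (Prod.mk x ⁻¹' T) := by
    intro x hx
    set A : Set ℝ := {y : ℝ | ((x : ℂ) + (y : ℂ) * Complex.I) ∈ S} with hA_def
    have hAmeas : MeasurableSet A := by
      have hm : Measurable fun y : ℝ => ((x : ℂ) + (y : ℂ) * Complex.I) := by
        fun_prop
      exact hSmeas.preimage hm
    have hAper : ∀ y, y + 2 * π ∈ A ↔ y ∈ A := by
      intro y
      simp only [hA_def, mem_setOf_eq]
      have e : ((x : ℂ) + ((y + 2 * π : ℝ) : ℂ) * Complex.I)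
          = ((x : ℂ) + (y : ℂ) * Complex.I) + 2 * (π : ℂ) * Complex.I := by
        push_cast; ring
      rw [e, hSp]
    have hxx0 : x0 ≤ x := le_trans (haval ▸ hw2) hx.1
    have hφx : φ0b ≤ φ0 x := by
      rw [hφ0b_def, ← hbval]
      exact hφ0mono x b hxx0 hx.2
    have hsetE : {y : ℝ | y ∈ Set.Icc 0 (2 * π) ∧ ((x : ℂ) + (y : ℂ) * Complex.I) ∈ S}
        = A ∩ Icc 0 (2 * π) := by
      ext y; simp [hA_def, and_comm]
    have hφx2 : φ0 x ≤ (volume (A ∩ Icc 0 (2 * π))).toReal := by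
      have := hφ x hxx0
      rwa [hsetE] at this
    have hCle : C ≤ volume (A ∩ Ioc 0 (0 + 2 * π)) := by
      have hsub1 : A ∩ Icc 0 (2 * π) ⊆ (A ∩ Ioc 0 (2 * π)) ∪ {0} := by
        rintro y ⟨hyA, hy0, hy2⟩
        rcases eq_or_lt_of_le hy0 with hy | hy
        · exact Or.inr (by simp [← hy])
        · exact Or.inl ⟨hyA, hy, hy2⟩
      have h1 : volume (A ∩ Icc 0 (2 * π)) ≤ volume (A ∩ Ioc 0 (2 * π)) := by
        calc volume (A ∩ Icc 0 (2 * π)) ≤ volume ((A ∩ Ioc 0 (2 * π)) ∪ {0}) :=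
              measure_mono hsub1
          _ ≤ volume (A ∩ Ioc 0 (2 * π)) + volume ({0} : Set ℝ) := measure_union_le _ _
          _ = volume (A ∩ Ioc 0 (2 * π)) := by rw [Real.volume_singleton, add_zero]
      calc C ≤ ENNReal.ofReal ((volume (A ∩ Icc 0 (2 * π))).toReal) :=
            ENNReal.ofReal_le_ofReal (le_trans hφx hφx2)
        _ ≤ volume (A ∩ Icc 0 (2 * π)) := ENNReal.ofReal_toReal_le
        _ ≤ volume (A ∩ Ioc 0 (2 * π)) := h1
        _ = volume (A ∩ Ioc 0 (0 + 2 * π)) := by rw [zero_add]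
    have hfit : c + (n : ℝ) * (2 * π) ≤ d := by
      have : (n : ℝ) * (2 * π) ≤ 2 * h := by
        rw [le_div_iff₀ hπ] at hnle
        nlinarith
      rw [hc_def, hd_def]; linarith
    have hlow := periodic_meas_lower hAmeas (by positivity : (0:ℝ) < 2 * π) hAper n c d hfit
    have hsub : A ∩ Ioc c d ⊆ Prod.mk x ⁻¹' T := by
      rintro y ⟨hyA, hy⟩
      simp only [hT_def, mem_preimage, Complex.measurableEquivRealProd_symm_apply]
      have hmk : (Complex.mk x y) = ((x : ℂ) + (y : ℂ) * Complex.I) := Complex.mk_eq_add_mul_I x y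
      constructor
      · rw [hmk]; exact hyA
      · rw [hQc_def]
        simp only [mem_setOf_eq, Complex.sub_re, Complex.sub_im]
        have hx1 := hx.1; have hx2 := hx.2
        have hy1 := hy.1; have hy2 := hy.2
        rw [ha_def] at hx1; rw [hb_def] at hx2
        rw [hc_def] at hy1; rw [hd_def] at hy2
        constructor
        · rw [abs_le]; constructor <;> linarith
        · rw [abs_le]; constructor <;> linarith [hy1.le]
    calc (n : ℝ≥0∞) * C ≤ (n : ℝ≥0∞) * volume (A ∩ Ioc 0 (0 + 2 * π)) :=
          mul_le_mul_right hCle _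
      _ ≤ volume (A ∩ Ioc c d) := hlow
      _ ≤ volume (Prod.mk x ⁻¹' T) := measure_mono hsub
  -- integrate
  have hint : ENNReal.ofReal (2 * h) * ((n : ℝ≥0∞) * C) ≤ volume T := by
    rw [hFub]
    calc ENNReal.ofReal (2 * h) * ((n : ℝ≥0∞) * C)
        = ∫⁻ x, (Icc a b).indicator (fun _ => (n : ℝ≥0∞) * C) x := by
          rw [lintegral_indicator measurableSet_Icc, setLIntegral_const, Real.volume_Icc,
            show b - a = 2 * h by rw [ha_def, hb_def]; ring, mul_comm]
      _ ≤ ∫⁻ x, volume (Prod.mk x ⁻¹' T) := by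
          refine lintegral_mono fun x => ?_
          by_cases hx : x ∈ Icc a b
          · simpa [indicator_of_mem hx] using hslice x hx
          · simp [indicator_of_notMem hx]
  have hφ0bnn : 0 ≤ φ0b := hφ0nn _ (le_trans hw2 (by linarith))
  have hfin : volume (S ∩ Qc) ≠ ⊤ := by
    refine (lt_of_le_of_lt (le_trans (measure_mono inter_subset_right) hQvol.le) ?_).ne
    exact ENNReal.mul_lt_top ENNReal.ofReal_lt_top ENNReal.ofReal_lt_top
  have hvol_real : 2 * h * ((n : ℝ) * φ0b) ≤ (volume (S ∩ Qc)).toReal := by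
    rw [← ENNReal.ofReal_le_iff_le_toReal hfin, hST]
    calc ENNReal.ofReal (2 * h * ((n : ℝ) * φ0b))
        = ENNReal.ofReal (2 * h) * ((n : ℝ≥0∞) * C) := by
          rw [ENNReal.ofReal_mul (by positivity), ENNReal.ofReal_mul (Nat.cast_nonneg n),
            ENNReal.ofReal_natCast, hC_def]
      _ ≤ volume T := hint
  have hQr : (volume Qc).toReal = 2 * h * (2 * h) := by
    rw [hQvol, ← ENNReal.ofReal_mul (by positivity), ENNReal.toReal_ofReal (by positivity)]
  rw [hQr, le_div_iff₀ (by positivity)]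
  have key : 1 / (4 * π) * φ0b * (2 * h * (2 * h)) ≤ 2 * h * ((n : ℝ) * φ0b) := by
    rw [div_mul_eq_mul_div, div_mul_eq_mul_div, div_le_iff₀ (by positivity : (0:ℝ) < 4 * π)]
    have hprod := mul_le_mul_of_nonneg_left hnge
      (mul_nonneg hφ0bnn (by positivity : (0:ℝ) ≤ 4 * h))
    linarith [hprod]
  linarith [key, hvol_real]
end
end

section
/- Let f : ℂ → ℂ be a nonconstant entire function which is the limit, locally uniformly on ℂ, of a sequence of polynomials with real coefficients all of whose zeros are real. Then every zero of the derivative f' is real. -/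
open Filter Polynomial

noncomputable section

private lemma msum_nonneg (s : Multiset ℝ) (h : ∀ x ∈ s, 0 ≤ x) : 0 ≤ s.sum := by
  induction s using Multiset.induction_on with
  | empty => simp
  | cons a t ih =>
    rw [Multiset.sum_cons]
    have := h a (Multiset.mem_cons_self a t)
    have := ih fun x hx => h x (Multiset.mem_cons_of_mem hx)
    positivity

private lemma msum_pos (s : Multiset ℝ) (h : ∀ x ∈ s, 0 < x) (hs : s ≠ 0) : 0 < s.sum := by
  obtain ⟨a, ha⟩ := Multiset.exists_mem_of_ne_zero hs
  rw [← Multiset.cons_erase ha, Multiset.sum_cons]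
  have h1 := h a ha
  have h2 : (0:ℝ) ≤ (s.erase a).sum :=
    msum_nonneg _ fun x hx => (h x (Multiset.mem_of_mem_erase hx)).le
  linarith

/-- logarithmic derivative formula for products of `X - C r`. -/
private lemma deriv_prod_eval (z : ℂ) (s : Multiset ℂ) (hs : ∀ r ∈ s, z - r ≠ 0) :
    (Polynomial.derivative (s.map (fun r => X - C r)).prod).eval z =
      ((s.map (fun r => X - C r)).prod.eval z) * (s.map fun r => (z - r)⁻¹).sum := by
  induction s using Multiset.induction_on with
  | empty => simp
  | cons a t ih =>
    have ha : z - a ≠ 0 := hs a (Multiset.mem_cons_self a t)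
    have ih' := ih fun r hr => hs r (Multiset.mem_cons_of_mem hr)
    simp only [Multiset.map_cons, Multiset.prod_cons, Multiset.sum_cons, derivative_mul,
      derivative_sub, derivative_X, derivative_C, sub_zero, one_mul, eval_add, eval_mul,
      eval_sub, eval_X, eval_C, eval_multiset_prod] at *
    rw [ih']
    field_simp

/-- key algebraic lemma: the derivative of a complex polynomial all of whose zeros
are real has only real zeros (when the derivative is nonzero). -/
private lemma key_lemma (q : Polynomial ℂ) (hd : Polynomial.derivative q ≠ 0)
    (hroots : ∀ z : ℂ, q.eval z = 0 → z.im = 0) {z : ℂ} (hz : z.im ≠ 0) :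
    (Polynomial.derivative q).eval z ≠ 0 := by
  have hq : q ≠ 0 := by rintro rfl; simp at hd
  have hsplit := Splits.eq_prod_roots (IsAlgClosed.splits q)
  have hr_real : ∀ r ∈ q.roots, r.im = 0 := fun r hr =>
    hroots r ((mem_roots hq).1 hr)
  have hzr : ∀ r ∈ q.roots, z - r ≠ 0 := by
    intro r hr h
    apply hz
    have : z = r := by linear_combination h
    rw [this]; exact hr_real r hr
  set s := q.roots with hs
  -- roots are nonempty
  have hsne : s ≠ 0 := by
    intro h0
    apply hd
    rw [hsplit, h0]
    simp only [Multiset.map_zero, Multiset.prod_zero, mul_one, derivative_C]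
  have hprod_ne : ((s.map (fun r => X - C r)).prod.eval z) ≠ 0 := by
    rw [eval_multiset_prod, Multiset.map_map]
    apply Multiset.prod_ne_zero
    intro h0
    rw [Multiset.mem_map] at h0
    obtain ⟨r, hr, hr0⟩ := h0
    apply hzr r hr
    simpa using hr0
  -- the sum of reciprocals has nonzero imaginary part
  have hsum_ne : ((s.map fun r => (z - r)⁻¹).sum) ≠ 0 := by
    intro h0
    have him : ((s.map fun r => (z - r)⁻¹).sum).im = 0 := by rw [h0]; rfl
    rw [show ((s.map fun r => (z - r)⁻¹).sum).im
        = (Complex.imAddGroupHom ((s.map fun r => (z - r)⁻¹).sum)) from rfl,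
      map_multiset_sum, Multiset.map_map] at him
    have heq : Multiset.map (Complex.imAddGroupHom ∘ fun r => (z - r)⁻¹) s
        = Multiset.map (fun r => -z.im / Complex.normSq (z - r)) s := by
      apply Multiset.map_congr rfl
      intro r hr
      simp only [Function.comp_apply, Complex.coe_imAddGroupHom, Complex.inv_im,
        Complex.sub_im, hr_real r hr, sub_zero]
    rw [heq] at him
    have heq2 : Multiset.map (fun r => -z.im / Complex.normSq (z - r)) s
        = Multiset.map (fun t : ℝ => -z.im * t) (Multiset.map
            (fun r => (Complex.normSq (z - r))⁻¹) s) := by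
      rw [Multiset.map_map]
      apply Multiset.map_congr rfl
      intro r _
      simp [div_eq_mul_inv]
    rw [heq2, Multiset.sum_map_mul_left, Multiset.map_id'] at him
    have hT : 0 < (Multiset.map (fun r => (Complex.normSq (z - r))⁻¹) s).sum := by
      apply msum_pos
      · intro x hx
        simp only [Multiset.mem_map] at hx
        obtain ⟨r, hr, rfl⟩ := hx
        have := hzr r hr
        have : 0 < Complex.normSq (z - r) := Complex.normSq_pos.2 this
        positivity
      · simpa using hsne
    rcases mul_eq_zero.1 him with h | h
    · exact hz (by linarith [neg_eq_zero.1 h])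
    · exact absurd h hT.ne'
  have hlc : q.leadingCoeff ≠ 0 := leadingCoeff_ne_zero.2 hq
  rw [hsplit]
  rw [derivative_mul, derivative_C, zero_mul, zero_add, eval_mul, eval_C,
    deriv_prod_eval z s hzr]
  exact mul_ne_zero hlc (mul_ne_zero hprod_ne hsum_ne)

/-- if a nonconstant entire function `f` is the locally uniform limit of
real polynomials all of whose zeros are real, then every zero of `f'` is real. -/
theorem stmt19 (f : ℂ → ℂ) (hf : Differentiable ℂ f)
    (hnonconst : ¬ ∃ c : ℂ, ∀ z : ℂ, f z = c)
    (p : ℕ → Polynomial ℝ)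
    (hzeros : ∀ n : ℕ, ∀ z : ℂ, Polynomial.aeval z (p n) = 0 → z.im = 0)
    (hconv : TendstoLocallyUniformly
      (fun n : ℕ => fun z : ℂ => (Polynomial.aeval z (p n) : ℂ)) f atTop) :
    ∀ z : ℂ, deriv f z = 0 → z.im = 0 := by
  -- set up: q n is p n over ℂ, F n its evaluation map
  set q : ℕ → Polynomial ℂ := fun n => (p n).map (algebraMap ℝ ℂ) with hqdef
  have hFq : ∀ n (z : ℂ), (Polynomial.aeval z (p n) : ℂ) = (q n).eval z := by
    intro n z; rw [hqdef, aeval_def, eval₂_eq_eval_map]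
  set F : ℕ → ℂ → ℂ := fun n z => (q n).eval z with hFdef
  have hconv' : TendstoLocallyUniformly F f atTop := by
    have hFF : (fun n : ℕ => fun z : ℂ => (Polynomial.aeval z (p n) : ℂ)) = F := by
      funext n z; exact hFq n z
    rw [← hFF]
    exact hconv
  -- derivative convergence
  have hFd : ∀ n, Differentiable ℂ (F n) := fun n => (q n).differentiable
  have hdconv : TendstoLocallyUniformly (fun n => deriv (F n)) (deriv f) atTop := by
    have h1 : TendstoLocallyUniformlyOn F f atTop Set.univ :=
      tendstoLocallyUniformlyOn_univ.2 hconv'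
    have h2 := h1.deriv (Eventually.of_forall fun n => (hFd n).differentiableOn)
      isOpen_univ
    exact tendstoLocallyUniformlyOn_univ.1 h2
  have hderivF : ∀ n, deriv (F n) = fun z => (Polynomial.derivative (q n)).eval z := by
    intro n; funext z
    simp only [hFdef]
    exact Polynomial.deriv (p := q n)
  -- deriv f is analytic and not identically zero
  have hfanal : AnalyticOnNhd ℂ f Set.univ := fun x _ => hf.analyticAt x
  have hganalOn : AnalyticOnNhd ℂ (deriv f) Set.univ := hfanal.deriv
  have hg : Differentiable ℂ (deriv f) := fun x =>
    (hganalOn x (Set.mem_univ x)).differentiableAt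
  have hgne : ∃ w, deriv f w ≠ 0 := by
    by_contra h
    push_neg at h
    exact hnonconst ⟨f 0, fun z => is_const_of_deriv_eq_zero hf h z 0⟩
  obtain ⟨w, hw⟩ := hgne
  intro z₀ h0
  by_contra him
  -- eventually the polynomial derivatives are nonzero as polynomials
  have hptw : Tendsto (fun n => deriv (F n) w) atTop (nhds (deriv f w)) :=
    (tendstoLocallyUniformlyOn_univ.2 hdconv).tendsto_at (Set.mem_univ w)
  have hev1 : ∀ᶠ n in atTop, Polynomial.derivative (q n) ≠ 0 := by
    filter_upwards [hptw.eventually_ne hw] with n hn h0'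
    apply hn
    rw [hderivF n, h0']
    simp
  -- nonzero derivatives have only real zeros
  have hqroots : ∀ n, ∀ z : ℂ, (q n).eval z = 0 → z.im = 0 := by
    intro n z hz
    exact hzeros n z (by rw [hFq n z]; exact hz)
  -- choose a small ball around z₀ avoiding the real axis on which deriv f
  -- vanishes only at z₀
  have hganal : ∀ x : ℂ, AnalyticAt ℂ (deriv f) x := fun x =>
    hganalOn x (Set.mem_univ x)
  have hne_punct : ∀ᶠ x in nhdsWithin z₀ {z₀}ᶜ, deriv f x ≠ 0 := by
    rcases (hganal z₀).eventually_eq_zero_or_eventually_ne_zero with h | h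
    · exfalso
      have : ∀ x, deriv f x = 0 := by
        have := hganalOn.eqOn_zero_of_preconnected_of_eventuallyEq_zero
          isPreconnected_univ (Set.mem_univ z₀) h
        intro x; exact this (Set.mem_univ x)
      exact hw (this w)
    · exact h
  rw [eventually_nhdsWithin_iff, Metric.eventually_nhds_iff] at hne_punct
  obtain ⟨ε₀, hε₀, hball⟩ := hne_punct
  set ε : ℝ := min (ε₀ / 2) (|z₀.im| / 2) with hεdef
  have habs : 0 < |z₀.im| := abs_pos.2 him
  have hε : 0 < ε := lt_min (by linarith) (by linarith)
  have hball_im : ∀ x ∈ Metric.closedBall z₀ ε, x.im ≠ 0 := by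
    intro x hx h0'
    rw [Metric.mem_closedBall] at hx
    have h1 : |x.im - z₀.im| ≤ dist x z₀ := by
      rw [Complex.dist_eq, ← Complex.sub_im]
      exact Complex.abs_im_le_norm _
    have h2 : ε < |z₀.im| := lt_of_le_of_lt (min_le_right _ _) (by linarith)
    rw [h0'] at h1
    rw [abs_sub_comm] at h1
    simp only [sub_zero] at h1
    linarith
  have hball_ne : ∀ x ∈ Metric.closedBall z₀ ε, x ≠ z₀ → deriv f x ≠ 0 := by
    intro x hx hxne
    apply hball
    · calc dist x z₀ ≤ ε := Metric.mem_closedBall.1 hx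
        _ < ε₀ := lt_of_le_of_lt (min_le_left _ _) (by linarith)
    · exact hxne
  -- minimum of ‖deriv f‖ on the sphere
  have hsph_ne : (Metric.sphere z₀ ε).Nonempty := NormedSpace.sphere_nonempty.2 hε.le
  have hsph_cpt : IsCompact (Metric.sphere z₀ ε) := isCompact_sphere z₀ ε
  obtain ⟨x₀, hx₀s, hx₀min⟩ := hsph_cpt.exists_isMinOn hsph_ne
    (continuous_norm.comp hg.continuous).continuousOn
  set m : ℝ := ‖deriv f x₀‖ with hmdef
  have hsph_sub : Metric.sphere z₀ ε ⊆ Metric.closedBall z₀ ε :=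
    Metric.sphere_subset_closedBall
  have hm : 0 < m := by
    rw [hmdef, norm_pos_iff]
    apply hball_ne x₀ (hsph_sub hx₀s)
    intro h
    rw [h] at hx₀s
    simp only [Metric.mem_sphere, dist_self] at hx₀s
    linarith
  -- uniform convergence on the closed ball
  have hdconvOn : TendstoUniformlyOn (fun n => deriv (F n)) (deriv f) atTop
      (Metric.closedBall z₀ ε) :=
    (tendstoLocallyUniformlyOn_iff_forall_isCompact isOpen_univ).1
      (tendstoLocallyUniformlyOn_univ.2 hdconv) (Metric.closedBall z₀ ε)
      (Set.subset_univ _) (isCompact_closedBall z₀ ε)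
  have hev2 : ∀ᶠ n in atTop, ∀ x ∈ Metric.closedBall z₀ ε,
      dist (deriv f x) (deriv (F n) x) < m / 2 :=
    (Metric.tendstoUniformlyOn_iff.1 hdconvOn) (m / 2) (by linarith)
  obtain ⟨n, hn1, hn2⟩ := (hev1.and hev2).exists
  -- the polynomial derivative is nonvanishing on the ball
  have hGne : ∀ x ∈ Metric.closedBall z₀ ε, deriv (F n) x ≠ 0 := by
    intro x hx h0'
    rw [hderivF n] at h0'
    exact key_lemma (q n) hn1 (hqroots n) (hball_im x hx) h0'
  -- minimum modulus principle via maximum principle for the inverse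
  set G : ℂ → ℂ := fun x => (deriv (F n) x)⁻¹ with hGdef
  have hFn_cont : Continuous (deriv (F n)) := by
    rw [hderivF n]; exact (Polynomial.derivative (q n)).continuous
  have hGd : DiffContOnCl ℂ G (Metric.ball z₀ ε) := by
    constructor
    · apply DifferentiableOn.inv
      · rw [hderivF n]
        exact (Polynomial.derivative (q n)).differentiable.differentiableOn
      · intro x hx
        exact hGne x (Metric.ball_subset_closedBall hx)
    · rw [closure_ball z₀ hε.ne']
      apply ContinuousOn.inv₀ hFn_cont.continuousOn
      exact hGne
  have hfront : frontier (Metric.ball z₀ ε) = Metric.sphere z₀ ε :=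
    frontier_ball z₀ hε.ne'
  have hbound : ∀ x ∈ frontier (Metric.ball z₀ ε), ‖G x‖ ≤ (m / 2)⁻¹ := by
    intro x hx
    rw [hfront] at hx
    have hx' : x ∈ Metric.closedBall z₀ ε := hsph_sub hx
    have h1 : m ≤ ‖deriv f x‖ := hx₀min hx
    have h2 : dist (deriv f x) (deriv (F n) x) < m / 2 := hn2 x hx'
    have h3 : m / 2 ≤ ‖deriv (F n) x‖ := by
      have := norm_sub_norm_le (deriv f x) (deriv (F n) x)
      rw [dist_eq_norm] at h2
      linarith
    rw [hGdef]
    simp only [norm_inv]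
    apply inv_anti₀ (by linarith) h3
  have hz₀mem : z₀ ∈ closure (Metric.ball z₀ ε) := by
    rw [closure_ball z₀ hε.ne']
    exact Metric.mem_closedBall_self hε.le
  have hmax := Complex.norm_le_of_forall_mem_frontier_norm_le
    Metric.isBounded_ball hGd hbound hz₀mem
  -- contradiction: deriv (F n) z₀ is close to deriv f z₀ = 0 but has norm ≥ m/2
  have hz₀ball : z₀ ∈ Metric.closedBall z₀ ε := Metric.mem_closedBall_self hε.le
  have hclose : dist (deriv f z₀) (deriv (F n) z₀) < m / 2 := hn2 z₀ hz₀ball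
  rw [h0, dist_eq_norm, zero_sub, norm_neg] at hclose
  have hGz₀ : ‖G z₀‖ = ‖deriv (F n) z₀‖⁻¹ := by rw [hGdef]; simp
  rw [hGz₀] at hmax
  have hne0 : deriv (F n) z₀ ≠ 0 := hGne z₀ hz₀ball
  have hpos : 0 < ‖deriv (F n) z₀‖ := norm_pos_iff.2 hne0
  have : m / 2 ≤ ‖deriv (F n) z₀‖ := by
    rw [inv_le_inv₀ (by positivity) (by linarith)] at hmax
    linarith
  linarith
end
end
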